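/- Let (K,R) be a quasitriangular Hopf *-algebra with antireal R-matrix (R^{*⊗*} = R^{-1}), and L a K-module *-algebra. Then L⊗L with the braided product (x⊗y)·(x'⊗y') = x(R_α▷x') ⊗ (Rᵅ▷y)y' and involution (x⊗y)* := (R_α▷x*) ⊗ (Rᵅ▷y*) is a K-module *-algebra: the involution is antimultiplicative and satisfies (k▷(x⊗y))* = S^{-1}(k*)▷(x⊗y)*. -/

import Mathlib

/-! STATEMENT 11: the braided tensor product of a module *-algebra over a quasitriangular Hopf *-algebra with antireal R-matrix is a module *-algebra. -/

noncomputable section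
open TensorProduct

variable (𝕜 : Type*) [CommRing 𝕜]
variable (K : Type*) [Ring K] [HopfAlgebra 𝕜 K]
/-- `Δ ⊗ id` as an algebra map `K ⊗ K → K ⊗ (K ⊗ K)`. -/
def comul12 : K ⊗[𝕜] K →ₐ[𝕜] K ⊗[𝕜] (K ⊗[𝕜] K) :=
  (Algebra.TensorProduct.assoc 𝕜 𝕜 𝕜 K K K).toAlgHom.comp
    (Algebra.TensorProduct.map (Bialgebra.comulAlgHom 𝕜 K) (AlgHom.id 𝕜 K))

/-- `id ⊗ Δ`. -/
def comul23 : K ⊗[𝕜] K →ₐ[𝕜] K ⊗[𝕜] (K ⊗[𝕜] K) :=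
  Algebra.TensorProduct.map (AlgHom.id 𝕜 K) (Bialgebra.comulAlgHom 𝕜 K)

/-- `x ⊗ y ↦ x ⊗ y ⊗ 1`. -/
def ins12 : K ⊗[𝕜] K →ₐ[𝕜] K ⊗[𝕜] (K ⊗[𝕜] K) :=
  Algebra.TensorProduct.map (AlgHom.id 𝕜 K) Algebra.TensorProduct.includeLeft

/-- `x ⊗ y ↦ 1 ⊗ x ⊗ y`. -/
def ins23 : K ⊗[𝕜] K →ₐ[𝕜] K ⊗[𝕜] (K ⊗[𝕜] K) :=
  Algebra.TensorProduct.includeRight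

/-- `x ⊗ y ↦ x ⊗ 1 ⊗ y`. -/
def ins13 : K ⊗[𝕜] K →ₐ[𝕜] K ⊗[𝕜] (K ⊗[𝕜] K) :=
  Algebra.TensorProduct.map (AlgHom.id 𝕜 K) Algebra.TensorProduct.includeRight

/-- Quasitriangular structure: `R` invertible with inverse `Ri`,
quasi-cocommutativity `τ(Δ k) R = R Δ k`, and the two hexagon relations. -/
structure QuasiTri (R Ri : K ⊗[𝕜] K) : Prop where
  mul_inv : R * Ri = 1
  inv_mul : Ri * R = 1
  quasi : ∀ k : K, (TensorProduct.comm 𝕜 K K) (Coalgebra.comul k) * R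
      = R * (Coalgebra.comul k : K ⊗[𝕜] K)
  hex1 : comul12 𝕜 K R = ins13 𝕜 K R * ins23 𝕜 K R
  hex2 : comul23 𝕜 K R = ins13 𝕜 K R * ins12 𝕜 K R
/-- Given an action `β` of `K` and a bilinear operation `μ` on `M`, the map
sending `t = Σ k₁ ⊗ k₂` and `a, b` to `Σ μ (k₁ ▷ a) (k₂ ▷ b)` (Sweedler-style
combination). -/
def sweedlerOp {M : Type*} [AddCommGroup M] [Module 𝕜 M]
    (β : K →ₗ[𝕜] M →ₗ[𝕜] M) (μ : M →ₗ[𝕜] M →ₗ[𝕜] M) :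
    K ⊗[𝕜] K →ₗ[𝕜] M →ₗ[𝕜] M →ₗ[𝕜] M :=
  TensorProduct.lift <| LinearMap.mk₂ 𝕜
    (fun k1 k2 => (μ.comp (β k1)).compl₂ (β k2))
    (fun k k' l => by ext a b; simp [LinearMap.compl₂_apply, map_add])
    (fun c k l => by ext a b; simp [LinearMap.compl₂_apply, map_smul])
    (fun k l l' => by ext a b; simp [LinearMap.compl₂_apply, map_add])
    (fun c k l => by ext a b; simp [LinearMap.compl₂_apply, map_smul])

/-- A module-algebra action of the bialgebra `K` on the algebra `A`:
`act` is a representation of `K`, `k ▷ (ab) = (k₍₁₎ ▷ a)(k₍₂₎ ▷ b)` and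
`k ▷ 1 = ε(k) 1`. -/
structure MAlgAction {A : Type*} [Ring A] [Algebra 𝕜 A]
    (act : K →ₗ[𝕜] A →ₗ[𝕜] A) : Prop where
  act_act : ∀ k l : K, act (k * l) = (act k).comp (act l)
  act_one : act 1 = LinearMap.id
  act_mul : ∀ (k : K) (a b : A),
    act k (a * b) = sweedlerOp 𝕜 K act (LinearMap.mul 𝕜 A) (Coalgebra.comul k) a b
  act_unit : ∀ k : K, act k 1 = Coalgebra.counit (R := 𝕜) k • (1 : A)
variable {L : Type*} [Ring L] [Algebra 𝕜 L]

/-- The action of `K ⊗ K` on `L ⊗ L` acting componentwise. -/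
def actPair (act : K →ₗ[𝕜] L →ₗ[𝕜] L) :
    K ⊗[𝕜] K →ₗ[𝕜] (L ⊗[𝕜] L →ₗ[𝕜] L ⊗[𝕜] L) :=
  (TensorProduct.homTensorHomMap (RingHom.id 𝕜) L L L L).comp (TensorProduct.map act act)

/-- The braiding `Ψ_R : y ⊗ x ↦ (R_α ▷ x) ⊗ (Rᵅ ▷ y)`. -/
def braiding (act : K →ₗ[𝕜] L →ₗ[𝕜] L) (R : K ⊗[𝕜] K) :
    L ⊗[𝕜] L →ₗ[𝕜] L ⊗[𝕜] L :=
  (actPair 𝕜 K act ((TensorProduct.comm 𝕜 K K) R)).comp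
    (TensorProduct.comm 𝕜 L L).toLinearMap

/-- The braided product on `(L ⊗ L) ⊗ (L ⊗ L)`:
`(x ⊗ y)(x' ⊗ y') = x (R_α ▷ x') ⊗ (Rᵅ ▷ y) y'`. -/
def botMulAux (act : K →ₗ[𝕜] L →ₗ[𝕜] L) (R : K ⊗[𝕜] K) :
    (L ⊗[𝕜] L) ⊗[𝕜] (L ⊗[𝕜] L) →ₗ[𝕜] L ⊗[𝕜] L :=
  (TensorProduct.map (LinearMap.mul' 𝕜 L) (LinearMap.mul' 𝕜 L)).comp <|
  (TensorProduct.assoc 𝕜 (L ⊗[𝕜] L) L L).toLinearMap.comp <|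
  (TensorProduct.map (TensorProduct.assoc 𝕜 L L L).symm.toLinearMap
      (LinearMap.id : L →ₗ[𝕜] L)).comp <|
  (TensorProduct.map
      (TensorProduct.map (LinearMap.id : L →ₗ[𝕜] L) (braiding 𝕜 K act R))
      (LinearMap.id : L →ₗ[𝕜] L)).comp <|
  (TensorProduct.map (TensorProduct.assoc 𝕜 L L L).toLinearMap
      (LinearMap.id : L →ₗ[𝕜] L)).comp
  (TensorProduct.assoc 𝕜 (L ⊗[𝕜] L) L L).symm.toLinearMap

/-- The braided product on `L ⊗ L` as a bilinear map. -/
def botMul (act : K →ₗ[𝕜] L →ₗ[𝕜] L) (R : K ⊗[𝕜] K) :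
    L ⊗[𝕜] L →ₗ[𝕜] L ⊗[𝕜] L →ₗ[𝕜] L ⊗[𝕜] L :=
  TensorProduct.curry (botMulAux 𝕜 K act R)

/-- The diagonal action of `K` on `L ⊗ L`, `k ▷ (x ⊗ y) = (k₍₁₎ ▷ x) ⊗ (k₍₂₎ ▷ y)`. -/
def diagAct (act : K →ₗ[𝕜] L →ₗ[𝕜] L) :
    K →ₗ[𝕜] (L ⊗[𝕜] L →ₗ[𝕜] L ⊗[𝕜] L) :=
  (actPair 𝕜 K act).comp (Coalgebra.comul : K →ₗ[𝕜] K ⊗[𝕜] K)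
section StarStructures

variable (H : Type*) [Ring H] [HopfAlgebra ℂ H] [StarRing H] [StarModule ℂ H]

/-- `starT` is the conjugate-linear extension of `x ⊗ y ↦ x* ⊗ y*` to
`H ⊗ H`. -/
structure IsStarT (starT : H ⊗[ℂ] H → H ⊗[ℂ] H) : Prop where
  map_add : ∀ s t : H ⊗[ℂ] H, starT (s + t) = starT s + starT t
  map_smul : ∀ (c : ℂ) (t : H ⊗[ℂ] H),
    starT (c • t) = (starRingEnd ℂ c) • starT t
  map_tmul : ∀ x y : H, starT (x ⊗ₜ[ℂ] y) = star x ⊗ₜ[ℂ] star y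

end StarStructures
namespace BraidedAux
set_option synthInstance.maxHeartbeats 400000
set_option maxHeartbeats 1000000

section Conv
variable {𝕜 : Type*} [CommRing 𝕜]
variable {B : Type*} [Ring B] [Algebra 𝕜 B]
variable {C : Type*} [AddCommGroup C] [Module 𝕜 C]

/-- Convolution product on `Hom(C, B)` with respect to comultiplication data `D`. -/
def convM (D : C →ₗ[𝕜] C ⊗[𝕜] C) (f g : C →ₗ[𝕜] B) : C →ₗ[𝕜] B :=
  (LinearMap.mul' 𝕜 B) ∘ₗ (TensorProduct.map f g) ∘ₗ D

lemma convM_apply (D : C →ₗ[𝕜] C ⊗[𝕜] C) (f g : C →ₗ[𝕜] B) (c : C) :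
    convM D f g c = (LinearMap.mul' 𝕜 B) (TensorProduct.map f g (D c)) := rfl

lemma convM_unit_left (D : C →ₗ[𝕜] C ⊗[𝕜] C) (ε' : C →ₗ[𝕜] 𝕜)
    (hl : ∀ c : C, ε'.rTensor C (D c) = (1 : 𝕜) ⊗ₜ[𝕜] c) (f : C →ₗ[𝕜] B) :
    convM D ((Algebra.linearMap 𝕜 B) ∘ₗ ε') f = f := by
  have key : (LinearMap.mul' 𝕜 B) ∘ₗ (TensorProduct.map ((Algebra.linearMap 𝕜 B) ∘ₗ ε') f)
      = f ∘ₗ (TensorProduct.lid 𝕜 C).toLinearMap ∘ₗ ε'.rTensor C := by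
    apply TensorProduct.ext'
    intro c c'
    simp [Algebra.smul_def]
  ext c
  have : convM D ((Algebra.linearMap 𝕜 B) ∘ₗ ε') f c
      = ((LinearMap.mul' 𝕜 B) ∘ₗ (TensorProduct.map ((Algebra.linearMap 𝕜 B) ∘ₗ ε') f)) (D c) :=
    rfl
  rw [this, key]
  simp [hl c]

lemma convM_unit_right (D : C →ₗ[𝕜] C ⊗[𝕜] C) (ε' : C →ₗ[𝕜] 𝕜)
    (hr : ∀ c : C, ε'.lTensor C (D c) = c ⊗ₜ[𝕜] (1 : 𝕜)) (f : C →ₗ[𝕜] B) :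
    convM D f ((Algebra.linearMap 𝕜 B) ∘ₗ ε') = f := by
  have key : (LinearMap.mul' 𝕜 B) ∘ₗ (TensorProduct.map f ((Algebra.linearMap 𝕜 B) ∘ₗ ε'))
      = f ∘ₗ (TensorProduct.rid 𝕜 C).toLinearMap ∘ₗ ε'.lTensor C := by
    apply TensorProduct.ext'
    intro c c'
    simp [Algebra.smul_def, Algebra.commutes]
  ext c
  have : convM D f ((Algebra.linearMap 𝕜 B) ∘ₗ ε') c
      = ((LinearMap.mul' 𝕜 B) ∘ₗ (TensorProduct.map f ((Algebra.linearMap 𝕜 B) ∘ₗ ε'))) (D c) :=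
    rfl
  rw [this, key]
  simp [hr c]

lemma convM_assoc (D : C →ₗ[𝕜] C ⊗[𝕜] C)
    (hco : ∀ c : C, D.rTensor C (D c)
      = (TensorProduct.assoc 𝕜 C C C).symm (D.lTensor C (D c)))
    (f g h : C →ₗ[𝕜] B) :
    convM D (convM D f g) h = convM D f (convM D g h) := by
  have key3 : ∀ u : C ⊗[𝕜] (C ⊗[𝕜] C),
      (LinearMap.mul' 𝕜 B) (TensorProduct.map ((LinearMap.mul' 𝕜 B) ∘ₗ TensorProduct.map f g) h
        ((TensorProduct.assoc 𝕜 C C C).symm u))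
      = (LinearMap.mul' 𝕜 B) (TensorProduct.map f ((LinearMap.mul' 𝕜 B) ∘ₗ TensorProduct.map g h) u) := by
    intro u
    induction u using TensorProduct.induction_on with
    | zero => simp
    | tmul c w =>
      induction w using TensorProduct.induction_on with
      | zero => simp
      | tmul c' c'' => simp [mul_assoc]
      | add w₁ w₂ h1 h2 => simp only [tmul_add, map_add, h1, h2]
    | add u₁ u₂ h1 h2 => simp only [map_add, h1, h2]
  ext c
  have lhs : convM D (convM D f g) h c
      = (LinearMap.mul' 𝕜 B) (TensorProduct.map ((LinearMap.mul' 𝕜 B) ∘ₗ TensorProduct.map f g) h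
          (D.rTensor C (D c))) := by
    have h1 : TensorProduct.map (convM D f g) h
        = TensorProduct.map ((LinearMap.mul' 𝕜 B) ∘ₗ TensorProduct.map f g) h ∘ₗ (D.rTensor C) := by
      rw [LinearMap.rTensor, ← TensorProduct.map_comp, LinearMap.comp_id]; rfl
    rw [convM_apply, h1]; simp only [LinearMap.comp_apply]
  have rhs : convM D f (convM D g h) c
      = (LinearMap.mul' 𝕜 B) (TensorProduct.map f ((LinearMap.mul' 𝕜 B) ∘ₗ TensorProduct.map g h)
          (D.lTensor C (D c))) := by
    have h1 : TensorProduct.map f (convM D g h)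
        = TensorProduct.map f ((LinearMap.mul' 𝕜 B) ∘ₗ TensorProduct.map g h) ∘ₗ (D.lTensor C) := by
      rw [LinearMap.lTensor, ← TensorProduct.map_comp, LinearMap.comp_id]; rfl
    rw [convM_apply, h1]; simp only [LinearMap.comp_apply]
  rw [lhs, rhs, hco c, key3]

lemma convM_inv_unique (D : C →ₗ[𝕜] C ⊗[𝕜] C) (ε' : C →ₗ[𝕜] 𝕜)
    (hco : ∀ c : C, D.rTensor C (D c)
      = (TensorProduct.assoc 𝕜 C C C).symm (D.lTensor C (D c)))
    (hl : ∀ c : C, ε'.rTensor C (D c) = (1 : 𝕜) ⊗ₜ c)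
    (hr : ∀ c : C, ε'.lTensor C (D c) = c ⊗ₜ (1 : 𝕜))
    (f m g : C →ₗ[𝕜] B)
    (h1 : convM D f m = (Algebra.linearMap 𝕜 B) ∘ₗ ε')
    (h2 : convM D m g = (Algebra.linearMap 𝕜 B) ∘ₗ ε') : f = g := by
  have e1 : f = convM D f ((Algebra.linearMap 𝕜 B) ∘ₗ ε') := (convM_unit_right D ε' hr f).symm
  rw [e1, ← h2, ← convM_assoc D hco, h1, convM_unit_left D ε' hl g]

end Conv

section Hopf
variable {𝕜 : Type*} [CommRing 𝕜] {K : Type*} [Ring K] [HopfAlgebra 𝕜 K]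

local notation "Δ" => (Coalgebra.comul : K →ₗ[𝕜] K ⊗[𝕜] K)
local notation "εK" => (Coalgebra.counit : K →ₗ[𝕜] 𝕜)
local notation "aS" => (HopfAlgebra.antipode 𝕜 : K →ₗ[𝕜] K)
local notation "μK" => LinearMap.mul' 𝕜 K
local notation "μ2" => LinearMap.mul' 𝕜 (K ⊗[𝕜] K)

lemma hcoK : ∀ c : K, LinearMap.rTensor K Δ (Δ c)
    = (TensorProduct.assoc 𝕜 K K K).symm (LinearMap.lTensor K Δ (Δ c)) := by
  intro c
  rw [← Coalgebra.coassoc_apply c]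
  simp

lemma antipode_one' : aS (1 : K) = 1 := by
  have h := HopfAlgebra.mul_antipode_rTensor_comul_apply (R := 𝕜) (A := K) 1
  rw [Bialgebra.comul_one, Algebra.TensorProduct.one_def] at h
  simpa using h

/-- `μ₂ ∘ (Δ ⊗ Δ) = Δ ∘ μ` -/
lemma mulDD : ∀ v : K ⊗[𝕜] K, μ2 (TensorProduct.map Δ Δ v) = Δ (μK v) := by
  intro v
  induction v using TensorProduct.induction_on with
  | zero => simp
  | tmul x y => simp
  | add a b ha hb => simp only [map_add, ha, hb]

end Hopf

section Hopf2
variable {𝕜 : Type*} [CommRing 𝕜] {K : Type*} [Ring K] [HopfAlgebra 𝕜 K]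

local notation "Δ" => (Coalgebra.comul : K →ₗ[𝕜] K ⊗[𝕜] K)
local notation "εK" => (Coalgebra.counit : K →ₗ[𝕜] 𝕜)
local notation "aS" => (HopfAlgebra.antipode 𝕜 : K →ₗ[𝕜] K)
local notation "μK" => LinearMap.mul' 𝕜 K
local notation "μ2" => LinearMap.mul' 𝕜 (K ⊗[𝕜] K)

/-- Comultiplication on `K ⊗ K`. -/
def D2 : K ⊗[𝕜] K →ₗ[𝕜] (K ⊗[𝕜] K) ⊗[𝕜] (K ⊗[𝕜] K) :=
  (TensorProduct.tensorTensorTensorComm 𝕜 K K K K).toLinearMap ∘ₗ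
    TensorProduct.map Coalgebra.comul Coalgebra.comul

/-- Counit on `K ⊗ K`. -/
def eps2 : K ⊗[𝕜] K →ₗ[𝕜] 𝕜 :=
  LinearMap.mul' 𝕜 𝕜 ∘ₗ TensorProduct.map Coalgebra.counit Coalgebra.counit

lemma D2_tmul (a b : K) :
    D2 (𝕜 := 𝕜) (K := K) (a ⊗ₜ b)
      = (TensorProduct.tensorTensorTensorComm 𝕜 K K K K) (TensorProduct.map Δ Δ (a ⊗ₜ b)) := rfl

lemma eps2_tmul (a b : K) :
    eps2 (𝕜 := 𝕜) (K := K) (a ⊗ₜ b) = εK a * εK b := rfl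

lemma D2_counit_left : ∀ c : K ⊗[𝕜] K,
    LinearMap.rTensor _ (eps2 (𝕜 := 𝕜) (K := K)) (D2 c) = (1 : 𝕜) ⊗ₜ c := by
  have sub : ∀ u v : K ⊗[𝕜] K,
      LinearMap.rTensor _ (eps2 (𝕜 := 𝕜) (K := K))
          ((TensorProduct.tensorTensorTensorComm 𝕜 K K K K) (u ⊗ₜ v))
        = TensorProduct.map (LinearMap.mul' 𝕜 𝕜) LinearMap.id
            ((TensorProduct.tensorTensorTensorComm 𝕜 𝕜 K 𝕜 K)
              ((LinearMap.rTensor K εK u) ⊗ₜ (LinearMap.rTensor K εK v))) := by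
    intro u v
    induction u using TensorProduct.induction_on with
    | zero => simp
    | tmul x y =>
      induction v using TensorProduct.induction_on with
      | zero => simp
      | tmul p q => simp [eps2]
      | add v₁ v₂ h1 h2 => simp only [tmul_add, map_add, h1, h2]
    | add u₁ u₂ h1 h2 => simp only [add_tmul, map_add, h1, h2]
  intro c
  induction c using TensorProduct.induction_on with
  | zero => simp
  | tmul a b =>
    rw [D2_tmul, TensorProduct.map_tmul, sub, Coalgebra.rTensor_counit_comul,
      Coalgebra.rTensor_counit_comul]
    simp
  | add c₁ c₂ h1 h2 => simp only [map_add, h1, h2, tmul_add]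

lemma D2_counit_right : ∀ c : K ⊗[𝕜] K,
    LinearMap.lTensor _ (eps2 (𝕜 := 𝕜) (K := K)) (D2 c) = c ⊗ₜ (1 : 𝕜) := by
  have sub : ∀ u v : K ⊗[𝕜] K,
      LinearMap.lTensor _ (eps2 (𝕜 := 𝕜) (K := K))
          ((TensorProduct.tensorTensorTensorComm 𝕜 K K K K) (u ⊗ₜ v))
        = TensorProduct.map LinearMap.id (LinearMap.mul' 𝕜 𝕜)
            ((TensorProduct.tensorTensorTensorComm 𝕜 K 𝕜 K 𝕜)
              ((LinearMap.lTensor K εK u) ⊗ₜ (LinearMap.lTensor K εK v))) := by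
    intro u v
    induction u using TensorProduct.induction_on with
    | zero => simp
    | tmul x y =>
      induction v using TensorProduct.induction_on with
      | zero => simp
      | tmul p q => simp [eps2]
      | add v₁ v₂ h1 h2 => simp only [tmul_add, map_add, h1, h2]
    | add u₁ u₂ h1 h2 => simp only [add_tmul, map_add, h1, h2]
  intro c
  induction c using TensorProduct.induction_on with
  | zero => simp
  | tmul a b =>
    rw [D2_tmul, TensorProduct.map_tmul, sub, Coalgebra.lTensor_counit_comul,
      Coalgebra.lTensor_counit_comul]
    simp
  | add c₁ c₂ h1 h2 => simp only [map_add, h1, h2, add_tmul]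

end Hopf2

section Hopf3
variable {𝕜 : Type*} [CommRing 𝕜] {K : Type*} [Ring K] [HopfAlgebra 𝕜 K]

local notation "Δ" => (Coalgebra.comul : K →ₗ[𝕜] K ⊗[𝕜] K)
local notation "εK" => (Coalgebra.counit : K →ₗ[𝕜] 𝕜)
local notation "aS" => (HopfAlgebra.antipode 𝕜 : K →ₗ[𝕜] K)
local notation "μK" => LinearMap.mul' 𝕜 K
local notation "K2" => K ⊗[𝕜] K

lemma D2_coassoc : ∀ c : K ⊗[𝕜] K,
    LinearMap.rTensor _ (D2 (𝕜 := 𝕜) (K := K)) (D2 c)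
      = (TensorProduct.assoc 𝕜 (K2) (K2) (K2)).symm
          (LinearMap.lTensor _ (D2 (𝕜 := 𝕜) (K := K)) (D2 c)) := by
  have E1 : ∀ u v : K ⊗[𝕜] K,
      LinearMap.rTensor _ (D2 (𝕜 := 𝕜) (K := K))
          ((TensorProduct.tensorTensorTensorComm 𝕜 K K K K) (u ⊗ₜ v))
        = TensorProduct.map (TensorProduct.tensorTensorTensorComm 𝕜 K K K K).toLinearMap
            LinearMap.id
            ((TensorProduct.tensorTensorTensorComm 𝕜 (K2) K (K2) K)
              ((LinearMap.rTensor K Δ u) ⊗ₜ (LinearMap.rTensor K Δ v))) := by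
    intro u v
    induction u using TensorProduct.induction_on with
    | zero => simp
    | tmul x y =>
      induction v using TensorProduct.induction_on with
      | zero => simp
      | tmul p q => simp [D2]
      | add v₁ v₂ h1 h2 => simp only [tmul_add, map_add, h1, h2]
    | add u₁ u₂ h1 h2 => simp only [add_tmul, map_add, h1, h2]
  have E2 : ∀ u v : K ⊗[𝕜] K,
      LinearMap.lTensor _ (D2 (𝕜 := 𝕜) (K := K))
          ((TensorProduct.tensorTensorTensorComm 𝕜 K K K K) (u ⊗ₜ v))
        = TensorProduct.map LinearMap.id
            (TensorProduct.tensorTensorTensorComm 𝕜 K K K K).toLinearMap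
            ((TensorProduct.tensorTensorTensorComm 𝕜 K (K2) K (K2))
              ((LinearMap.lTensor K Δ u) ⊗ₜ (LinearMap.lTensor K Δ v))) := by
    intro u v
    induction u using TensorProduct.induction_on with
    | zero => simp
    | tmul x y =>
      induction v using TensorProduct.induction_on with
      | zero => simp
      | tmul p q => simp [D2]
      | add v₁ v₂ h1 h2 => simp only [tmul_add, map_add, h1, h2]
    | add u₁ u₂ h1 h2 => simp only [add_tmul, map_add, h1, h2]
  have SHUF : ∀ w : (K ⊗[𝕜] (K ⊗[𝕜] K)) ⊗[𝕜] (K ⊗[𝕜] (K ⊗[𝕜] K)),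
      TensorProduct.map (TensorProduct.tensorTensorTensorComm 𝕜 K K K K).toLinearMap
          LinearMap.id
          ((TensorProduct.tensorTensorTensorComm 𝕜 (K2) K (K2) K)
            (TensorProduct.map (TensorProduct.assoc 𝕜 K K K).symm.toLinearMap
              (TensorProduct.assoc 𝕜 K K K).symm.toLinearMap w))
        = (TensorProduct.assoc 𝕜 (K2) (K2) (K2)).symm
            (TensorProduct.map LinearMap.id
              (TensorProduct.tensorTensorTensorComm 𝕜 K K K K).toLinearMap
              ((TensorProduct.tensorTensorTensorComm 𝕜 K (K2) K (K2)) w)) := by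
    intro w
    induction w using TensorProduct.induction_on with
    | zero => simp
    | tmul w₁ w₂ =>
      induction w₁ using TensorProduct.induction_on with
      | zero => simp
      | tmul x yy =>
        induction w₂ using TensorProduct.induction_on with
        | zero => simp
        | tmul p qq =>
          induction yy using TensorProduct.induction_on with
          | zero => simp
          | tmul y₁ y₂ =>
            induction qq using TensorProduct.induction_on with
            | zero => simp
            | tmul q₁ q₂ => simp
            | add a b ha hb => simp only [tmul_add, map_add, ha, hb]
          | add a b ha hb => simp only [tmul_add, add_tmul, map_add, ha, hb]
        | add a b ha hb => simp only [tmul_add, map_add, ha, hb]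
      | add a b ha hb => simp only [tmul_add, add_tmul, map_add, ha, hb]
    | add a b ha hb => simp only [map_add, ha, hb]
  intro c
  induction c using TensorProduct.induction_on with
  | zero => simp
  | tmul a b =>
    rw [D2_tmul, TensorProduct.map_tmul, E1, hcoK a, hcoK b,
      show ((TensorProduct.assoc 𝕜 K K K).symm (LinearMap.lTensor K Δ (Δ a))) ⊗ₜ[𝕜]
          ((TensorProduct.assoc 𝕜 K K K).symm (LinearMap.lTensor K Δ (Δ b)))
        = TensorProduct.map (TensorProduct.assoc 𝕜 K K K).symm.toLinearMap
            (TensorProduct.assoc 𝕜 K K K).symm.toLinearMap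
            ((LinearMap.lTensor K Δ (Δ a)) ⊗ₜ (LinearMap.lTensor K Δ (Δ b))) from rfl,
      SHUF, ← E2]
  | add c₁ c₂ h1 h2 => simp only [map_add, h1, h2]

end Hopf3

section Hopf4
variable {𝕜 : Type*} [CommRing 𝕜] {K : Type*} [Ring K] [HopfAlgebra 𝕜 K]

local notation "Δ" => (Coalgebra.comul : K →ₗ[𝕜] K ⊗[𝕜] K)
local notation "εK" => (Coalgebra.counit : K →ₗ[𝕜] 𝕜)
local notation "aS" => (HopfAlgebra.antipode 𝕜 : K →ₗ[𝕜] K)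
local notation "μK" => LinearMap.mul' 𝕜 K

/-- The antipode is antimultiplicative. -/
lemma antipode_mul' (a b : K) : aS (a * b) = aS b * aS a := by
  set ν : K ⊗[𝕜] K →ₗ[𝕜] K := aS ∘ₗ μK with hν
  set ρ : K ⊗[𝕜] K →ₗ[𝕜] K :=
    μK ∘ₗ TensorProduct.map aS aS ∘ₗ (TensorProduct.comm 𝕜 K K).toLinearMap with hρ
  -- μ ∘ (μ ⊗ μ) ∘ D2 = Δ-free: (μ ⊗ μ)(D2 c) = Δ (μ c)
  have MD2 : ∀ c : K ⊗[𝕜] K,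
      TensorProduct.map μK μK (D2 (𝕜 := 𝕜) (K := K) c) = Δ (μK c) := by
    have TMUL : ∀ u v : K ⊗[𝕜] K,
        TensorProduct.map μK μK ((TensorProduct.tensorTensorTensorComm 𝕜 K K K K) (u ⊗ₜ v))
          = u * v := by
      intro u v
      induction u using TensorProduct.induction_on with
      | zero => simp
      | tmul x y =>
        induction v using TensorProduct.induction_on with
        | zero => simp
        | tmul p q => simp [Algebra.TensorProduct.tmul_mul_tmul]
        | add v₁ v₂ h1 h2 => simp only [tmul_add, map_add, h1, h2, mul_add]
      | add u₁ u₂ h1 h2 => simp only [add_tmul, map_add, h1, h2, add_mul]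
    intro c
    induction c using TensorProduct.induction_on with
    | zero => simp
    | tmul a b => rw [D2_tmul, TensorProduct.map_tmul, TMUL]; simp
    | add c₁ c₂ h1 h2 => simp only [map_add, h1, h2]
  have EPS2 : ∀ c : K ⊗[𝕜] K, εK (μK c) = eps2 (𝕜 := 𝕜) (K := K) c := by
    intro c
    induction c using TensorProduct.induction_on with
    | zero => simp
    | tmul a b => simp [eps2]
    | add c₁ c₂ h1 h2 => simp only [map_add, h1, h2]
  have b2a : convM (D2 (𝕜 := 𝕜) (K := K)) ν μK
      = (Algebra.linearMap 𝕜 K) ∘ₗ (eps2 (𝕜 := 𝕜) (K := K)) := by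
    apply LinearMap.ext; intro c
    have h1 : TensorProduct.map ν μK
        = LinearMap.rTensor K aS ∘ₗ TensorProduct.map μK μK := by
      rw [LinearMap.rTensor, ← TensorProduct.map_comp, LinearMap.id_comp]
    rw [convM_apply, h1]
    simp only [LinearMap.comp_apply, MD2]
    rw [HopfAlgebra.mul_antipode_rTensor_comul_apply, EPS2]
    rfl
  have b2b : convM (D2 (𝕜 := 𝕜) (K := K)) μK ρ
      = (Algebra.linearMap 𝕜 K) ∘ₗ (eps2 (𝕜 := 𝕜) (K := K)) := by
    have sub1 : ∀ (x y : K) (v : K ⊗[𝕜] K),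
        μK (TensorProduct.map μK ρ
          ((TensorProduct.tensorTensorTensorComm 𝕜 K K K K) ((x ⊗ₜ y) ⊗ₜ v)))
        = x * μK (LinearMap.lTensor K aS v) * aS y := by
      intro x y v
      induction v using TensorProduct.induction_on with
      | zero => simp
      | tmul p q => simp [hρ, mul_assoc]
      | add v₁ v₂ h1 h2 => simp only [tmul_add, map_add, h1, h2, mul_add, add_mul]
    have sub2 : ∀ u : K ⊗[𝕜] K, ∀ b : K,
        μK (TensorProduct.map μK ρ
          ((TensorProduct.tensorTensorTensorComm 𝕜 K K K K) (u ⊗ₜ (Δ b))))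
        = εK b • μK (LinearMap.lTensor K aS u) := by
      intro u b
      induction u using TensorProduct.induction_on with
      | zero => simp
      | tmul x y =>
        rw [sub1, HopfAlgebra.mul_antipode_lTensor_comul_apply]
        simp [Algebra.smul_def, Algebra.commutes, mul_assoc]
      | add u₁ u₂ h1 h2 => simp only [add_tmul, map_add, h1, h2, smul_add]
    apply LinearMap.ext; intro c
    induction c using TensorProduct.induction_on with
    | zero => simp
    | tmul a b =>
      rw [convM_apply, D2_tmul, TensorProduct.map_tmul, sub2,
        HopfAlgebra.mul_antipode_lTensor_comul_apply]
      simp only [LinearMap.comp_apply, Algebra.linearMap_apply, eps2_tmul]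
      rw [Algebra.smul_def, ← map_mul, mul_comm (Coalgebra.counit b) (Coalgebra.counit a)]
    | add c₁ c₂ h1 h2 => simp only [map_add, h1, h2]
  have key : ν = ρ :=
    convM_inv_unique (D2 (𝕜 := 𝕜) (K := K)) (eps2 (𝕜 := 𝕜) (K := K))
      D2_coassoc D2_counit_left D2_counit_right ν μK ρ b2a b2b
  have := LinearMap.congr_fun key (a ⊗ₜ[𝕜] b)
  simpa [hν, hρ] using this

end Hopf4

section Hopf5
variable {𝕜 : Type*} [CommRing 𝕜] {K : Type*} [Ring K] [HopfAlgebra 𝕜 K]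

local notation "Δ" => (Coalgebra.comul : K →ₗ[𝕜] K ⊗[𝕜] K)
local notation "εK" => (Coalgebra.counit : K →ₗ[𝕜] 𝕜)
local notation "aS" => (HopfAlgebra.antipode 𝕜 : K →ₗ[𝕜] K)
local notation "μK" => LinearMap.mul' 𝕜 K
local notation "μ2" => LinearMap.mul' 𝕜 (K ⊗[𝕜] K)

/-- The antipode is an anti-coalgebra morphism. -/
lemma comul_antipode' (k : K) :
    Δ (aS k) = (TensorProduct.comm 𝕜 K K) (TensorProduct.map aS aS (Δ k)) := by
  set c1 : K →ₗ[𝕜] K ⊗[𝕜] K := Δ ∘ₗ aS with hc1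
  set q : K ⊗[𝕜] K →ₗ[𝕜] K ⊗[𝕜] K :=
    (TensorProduct.comm 𝕜 K K).toLinearMap ∘ₗ TensorProduct.map aS aS with hq
  set c2 : K →ₗ[𝕜] K ⊗[𝕜] K := q ∘ₗ Δ with hc2
  -- easy half: c1 ⋆ Δ = e
  have h1 : convM Δ c1 Δ = (Algebra.linearMap 𝕜 (K ⊗[𝕜] K)) ∘ₗ εK := by
    apply LinearMap.ext; intro k
    have hmap : TensorProduct.map c1 Δ
        = TensorProduct.map Δ Δ ∘ₗ LinearMap.rTensor K aS := by
      rw [LinearMap.rTensor, ← TensorProduct.map_comp, LinearMap.comp_id]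
    rw [convM_apply, hmap]
    simp only [LinearMap.comp_apply]
    rw [mulDD, HopfAlgebra.mul_antipode_rTensor_comul_apply]
    simp [Algebra.algebraMap_eq_smul_one]
  -- hard half: Δ ⋆ c2 = e
  have h2 : convM Δ Δ c2 = (Algebra.linearMap 𝕜 (K ⊗[𝕜] K)) ∘ₗ εK := by
    set Γ : K ⊗[𝕜] ((K ⊗[𝕜] K) ⊗[𝕜] K) →ₗ[𝕜] (K ⊗[𝕜] K) ⊗[𝕜] (K ⊗[𝕜] K) :=
      (TensorProduct.assoc 𝕜 K K (K ⊗[𝕜] K)).symm.toLinearMap ∘ₗ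
        LinearMap.lTensor K (TensorProduct.assoc 𝕜 K K K).toLinearMap with hΓ
    set j : K ⊗[𝕜] K →ₗ[𝕜] K :=
      μK ∘ₗ TensorProduct.map ((Algebra.linearMap 𝕜 K) ∘ₗ εK) aS with hj
    set κ : K ⊗[𝕜] (K ⊗[𝕜] K) →ₗ[𝕜] K ⊗[𝕜] K :=
      ((TensorProduct.mk 𝕜 K K).flip 1) ∘ₗ μK ∘ₗ LinearMap.lTensor K j with hκ
    -- coassociativity rearrangement
    have CA4 : ∀ k : K, TensorProduct.map Δ Δ (Δ k)
        = Γ (LinearMap.lTensor K (LinearMap.rTensor K Δ) (LinearMap.lTensor K Δ (Δ k))) := by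
      intro k
      have subL : ∀ (x : K) (u : K ⊗[𝕜] K),
          LinearMap.lTensor (K ⊗[𝕜] K) Δ
              ((TensorProduct.assoc 𝕜 K K K).symm (x ⊗ₜ u))
            = (TensorProduct.assoc 𝕜 K K (K ⊗[𝕜] K)).symm (x ⊗ₜ LinearMap.lTensor K Δ u) := by
        intro x u
        induction u using TensorProduct.induction_on with
        | zero => simp
        | tmul a b => simp
        | add a b ha hb => simp only [tmul_add, map_add, ha, hb]
      have subR : ∀ (x : K) (v : K ⊗[𝕜] (K ⊗[𝕜] K)),
          Γ (x ⊗ₜ (TensorProduct.assoc 𝕜 K K K).symm v)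
            = (TensorProduct.assoc 𝕜 K K (K ⊗[𝕜] K)).symm (x ⊗ₜ v) := by
        intro x v
        induction v using TensorProduct.induction_on with
        | zero => simp [hΓ]
        | tmul a w => simp [hΓ]
        | add a b ha hb => simp only [tmul_add, map_add, ha, hb]
      have hdec : TensorProduct.map Δ Δ (Δ k)
          = LinearMap.lTensor (K ⊗[𝕜] K) Δ (LinearMap.rTensor K Δ (Δ k)) := by
        rw [← LinearMap.lTensor_comp_rTensor (f := (Coalgebra.comul : K →ₗ[𝕜] K ⊗[𝕜] K))
          (g := (Coalgebra.comul : K →ₗ[𝕜] K ⊗[𝕜] K))]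
        rfl
      rw [hdec, hcoK k]
      -- now prove ∀ t, both sides agree on t := Δ k
      have main : ∀ t : K ⊗[𝕜] K,
          LinearMap.lTensor (K ⊗[𝕜] K) Δ
              ((TensorProduct.assoc 𝕜 K K K).symm (LinearMap.lTensor K Δ t))
            = Γ (LinearMap.lTensor K (LinearMap.rTensor K Δ) (LinearMap.lTensor K Δ t)) := by
        intro t
        induction t using TensorProduct.induction_on with
        | zero => simp
        | tmul x z =>
          have lhs : LinearMap.lTensor K Δ (x ⊗ₜ[𝕜] z) = x ⊗ₜ (Δ z) := rfl
          rw [lhs, LinearMap.lTensor_tmul, subL, hcoK z, subR]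
        | add a b ha hb => simp only [map_add, ha, hb]
      exact main (Δ k)
    -- contraction of the middle legs
    have stepC : ∀ w : K ⊗[𝕜] (K ⊗[𝕜] K),
        μ2 (TensorProduct.map LinearMap.id q
          (Γ (LinearMap.lTensor K (LinearMap.rTensor K Δ) w))) = κ w := by
      have subm : ∀ (x z : K) (u : K ⊗[𝕜] K),
          μ2 (TensorProduct.map LinearMap.id q (Γ (x ⊗ₜ (u ⊗ₜ z))))
            = (x * aS z) ⊗ₜ μK (LinearMap.lTensor K aS u) := by
        intro x z u
        induction u using TensorProduct.induction_on with
        | zero => simp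
        | tmul m₁ m₂ =>
          simp [hΓ, hq, Algebra.TensorProduct.tmul_mul_tmul]
        | add a b ha hb =>
          simp only [add_tmul, tmul_add, map_add, ha, hb]
      intro w
      induction w using TensorProduct.induction_on with
      | zero => simp
      | tmul x u =>
        induction u using TensorProduct.induction_on with
        | zero => simp
        | tmul m z =>
          have : LinearMap.lTensor K (LinearMap.rTensor K Δ) (x ⊗ₜ (m ⊗ₜ z))
              = x ⊗ₜ ((Δ m) ⊗ₜ z) := rfl
          rw [this, subm, HopfAlgebra.mul_antipode_lTensor_comul_apply]
          simp [hκ, hj, Algebra.algebraMap_eq_smul_one, mul_smul_comm, smul_mul_assoc]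
        | add a b ha hb => simp only [tmul_add, map_add, ha, hb]
      | add a b ha hb => simp only [map_add, ha, hb]
    -- assemble
    apply LinearMap.ext; intro k
    have hmap : TensorProduct.map Δ c2
        = TensorProduct.map LinearMap.id q ∘ₗ TensorProduct.map Δ Δ := by
      rw [← TensorProduct.map_comp, LinearMap.id_comp]
    rw [convM_apply, hmap]
    simp only [LinearMap.comp_apply]
    rw [CA4, stepC]
    -- κ (lTensor Δ (Δ k)) = algebraMap (ε k)
    have subκ : ∀ t : K ⊗[𝕜] K,
        κ (LinearMap.lTensor K Δ t)
          = (μK (LinearMap.lTensor K (j ∘ₗ Δ) t)) ⊗ₜ (1 : K) := by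
      intro t
      induction t using TensorProduct.induction_on with
      | zero => simp
      | tmul x z => simp [hκ]
      | add a b ha hb => simp only [map_add, ha, hb, add_tmul]
    have jΔ : ∀ z : K, j (Δ z) = aS z := by
      intro z
      have subj : ∀ t : K ⊗[𝕜] K,
          j t = aS ((TensorProduct.lid 𝕜 K) (LinearMap.rTensor K εK t)) := by
        intro t
        induction t using TensorProduct.induction_on with
        | zero => simp
        | tmul x z => simp [hj, Algebra.algebraMap_eq_smul_one, smul_mul_assoc]
        | add a b ha hb => simp only [map_add, ha, hb]
      rw [subj, Coalgebra.rTensor_counit_comul]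
      simp
    have hjd : LinearMap.lTensor K (j ∘ₗ Δ) = LinearMap.lTensor K aS := by
      congr 1
      exact LinearMap.ext jΔ
    rw [subκ, hjd, HopfAlgebra.mul_antipode_lTensor_comul_apply]
    simp [Algebra.TensorProduct.algebraMap_apply]
  have key : c1 = c2 :=
    convM_inv_unique Δ εK hcoK Coalgebra.rTensor_counit_comul Coalgebra.lTensor_counit_comul
      c1 Δ c2 h1 h2
  have := LinearMap.congr_fun key k
  simpa [hc1, hc2, hq] using this

end Hopf5

section HopfR
variable {𝕜 : Type*} [CommRing 𝕜] {K : Type*} [Ring K] [HopfAlgebra 𝕜 K]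

local notation "Δ" => (Coalgebra.comul : K →ₗ[𝕜] K ⊗[𝕜] K)
local notation "εK" => (Coalgebra.counit : K →ₗ[𝕜] 𝕜)
local notation "aS" => (HopfAlgebra.antipode 𝕜 : K →ₗ[𝕜] K)
local notation "μK" => LinearMap.mul' 𝕜 K

lemma comm_mul' (u v : K ⊗[𝕜] K) :
    (TensorProduct.comm 𝕜 K K) (u * v)
      = (TensorProduct.comm 𝕜 K K) u * (TensorProduct.comm 𝕜 K K) v := by
  induction u using TensorProduct.induction_on with
  | zero => simp
  | tmul x y =>
    induction v using TensorProduct.induction_on with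
    | zero => simp
    | tmul p q => simp [Algebra.TensorProduct.tmul_mul_tmul]
    | add a b ha hb => simp only [mul_add, map_add, ha, hb]
  | add a b ha hb => simp only [add_mul, map_add, ha, hb]

lemma comm_comm' (u : K ⊗[𝕜] K) :
    (TensorProduct.comm 𝕜 K K) ((TensorProduct.comm 𝕜 K K) u) = u := by
  induction u using TensorProduct.induction_on with
  | zero => simp
  | tmul x y => simp
  | add a b ha hb => simp only [map_add, ha, hb]

lemma comm_one' : (TensorProduct.comm 𝕜 K K) 1 = 1 := by
  rw [Algebra.TensorProduct.one_def]
  simp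

/-- `Σ S⁻¹(k₍₂₎) k₍₁₎ = ε(k) 1`. -/
lemma sinv_contract (Sinv : K →ₗ[𝕜] K)
    (hS₁ : ∀ k : K, aS (Sinv k) = k) (hS₂ : ∀ k : K, Sinv (aS k) = k) (d : K) :
    μK (LinearMap.rTensor K Sinv ((TensorProduct.comm 𝕜 K K) (Δ d)))
      = algebraMap 𝕜 K (εK d) := by
  have hinj : Function.Injective aS := Function.LeftInverse.injective hS₂
  apply hinj
  have sub : ∀ w : K ⊗[𝕜] K,
      aS (μK (LinearMap.rTensor K Sinv ((TensorProduct.comm 𝕜 K K) w)))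
        = μK (LinearMap.rTensor K aS w) := by
    intro w
    induction w using TensorProduct.induction_on with
    | zero => simp
    | tmul x y => simp [antipode_mul', hS₁]
    | add a b ha hb => simp only [map_add, ha, hb]
  rw [sub, HopfAlgebra.mul_antipode_rTensor_comul_apply]
  rw [Algebra.algebraMap_eq_smul_one, map_smul, antipode_one']

variable (R Ri : K ⊗[𝕜] K)

/-- `(S ⊗ id) R = R⁻¹`. -/
lemma rTensor_antipode_R (hQT : QuasiTri 𝕜 K R Ri) : LinearMap.rTensor K aS R = Ri := by
  -- the algebra morphism contracting the first leg with the counit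
  set G1 : K ⊗[𝕜] (K ⊗[𝕜] K) →ₐ[𝕜] K ⊗[𝕜] K :=
    (Algebra.TensorProduct.lid 𝕜 (K ⊗[𝕜] K)).toAlgHom.comp
      (Algebra.TensorProduct.map (Bialgebra.counitAlgHom 𝕜 K)
        (AlgHom.id 𝕜 (K ⊗[𝕜] K))) with hG1
  have g12 : ∀ W : K ⊗[𝕜] K, G1 (comul12 𝕜 K W) = W := by
    have sub : ∀ (u : K ⊗[𝕜] K) (d : K),
        G1 ((Algebra.TensorProduct.assoc 𝕜 𝕜 𝕜 K K K) (u ⊗ₜ d))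
          = ((TensorProduct.lid 𝕜 K) (LinearMap.rTensor K εK u)) ⊗ₜ d := by
      intro u d
      induction u using TensorProduct.induction_on with
      | zero => simp
      | tmul x y => simp [hG1, smul_tmul']
      | add a b ha hb => simp only [add_tmul, map_add, ha, hb]
    intro W
    induction W using TensorProduct.induction_on with
    | zero => simp
    | tmul c d =>
      have : comul12 𝕜 K (c ⊗ₜ d) = (Algebra.TensorProduct.assoc 𝕜 𝕜 𝕜 K K K) ((Δ c) ⊗ₜ d) := rfl
      rw [this, sub, Coalgebra.rTensor_counit_comul]
      simp
    | add a b ha hb => simp only [map_add, ha, hb]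
  have g13 : ∀ W : K ⊗[𝕜] K, G1 (ins13 𝕜 K W)
      = 1 ⊗ₜ ((TensorProduct.lid 𝕜 K) (LinearMap.rTensor K εK W)) := by
    intro W
    induction W using TensorProduct.induction_on with
    | zero => simp
    | tmul c d => simp [hG1, ins13]
    | add a b ha hb => simp only [map_add, ha, hb, tmul_add]
  have g23 : ∀ W : K ⊗[𝕜] K, G1 (ins23 𝕜 K W) = W := by
    intro W
    induction W using TensorProduct.induction_on with
    | zero => simp
    | tmul c d => simp [hG1, ins23]
    | add a b ha hb => simp only [map_add, ha, hb]
  set E : K := (TensorProduct.lid 𝕜 K) (LinearMap.rTensor K εK R) with hE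
  have hR : R = ((1 : K) ⊗ₜ[𝕜] E) * R := by
    conv_lhs => rw [← g12 R, hQT.hex1]
    rw [map_mul, g13, g23]
  have hEone : ((1 : K) ⊗ₜ[𝕜] E : K ⊗[𝕜] K) = 1 := by
    calc ((1 : K) ⊗ₜ[𝕜] E : K ⊗[𝕜] K) = ((1 : K) ⊗ₜ[𝕜] E) * (R * Ri) := by
          rw [hQT.mul_inv, mul_one]
      _ = (((1 : K) ⊗ₜ[𝕜] E) * R) * Ri := by rw [mul_assoc]
      _ = R * Ri := by rw [← hR]
      _ = 1 := hQT.mul_inv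
  -- the linear map a ⊗ b ⊗ c ↦ S(a)b ⊗ c
  set F : K ⊗[𝕜] (K ⊗[𝕜] K) →ₗ[𝕜] K ⊗[𝕜] K :=
    TensorProduct.map (μK ∘ₗ LinearMap.rTensor K aS) LinearMap.id ∘ₗ
      (TensorProduct.assoc 𝕜 K K K).symm.toLinearMap with hF
  have F12 : F (comul12 𝕜 K R) = (1 : K) ⊗ₜ[𝕜] E := by
    have sub : ∀ (u : K ⊗[𝕜] K) (d : K),
        F ((Algebra.TensorProduct.assoc 𝕜 𝕜 𝕜 K K K) (u ⊗ₜ d))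
          = (μK (LinearMap.rTensor K aS u)) ⊗ₜ d := by
      intro u d
      induction u using TensorProduct.induction_on with
      | zero => simp
      | tmul x y => simp [hF]
      | add a b ha hb => simp only [add_tmul, map_add, ha, hb]
    have main : ∀ W : K ⊗[𝕜] K, F (comul12 𝕜 K W)
        = (1 : K) ⊗ₜ[𝕜] ((TensorProduct.lid 𝕜 K) (LinearMap.rTensor K εK W)) := by
      intro W
      induction W using TensorProduct.induction_on with
      | zero => simp
      | tmul c d =>
        have : comul12 𝕜 K (c ⊗ₜ d) = (Algebra.TensorProduct.assoc 𝕜 𝕜 𝕜 K K K) ((Δ c) ⊗ₜ d) := rfl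
        rw [this, sub, HopfAlgebra.mul_antipode_rTensor_comul_apply]
        simp [Algebra.algebraMap_eq_smul_one, smul_tmul']
      | add a b ha hb => simp only [map_add, ha, hb, tmul_add]
    rw [main R, hE]
  have Fprod : ∀ u v : K ⊗[𝕜] K,
      F (ins13 𝕜 K u * ins23 𝕜 K v) = (LinearMap.rTensor K aS u) * v := by
    intro u v
    induction u using TensorProduct.induction_on with
    | zero => simp
    | tmul a b =>
      induction v using TensorProduct.induction_on with
      | zero => simp
      | tmul c d =>
        have : ins13 𝕜 K (a ⊗ₜ b) * ins23 𝕜 K (c ⊗ₜ d)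
            = a ⊗ₜ[𝕜] (c ⊗ₜ[𝕜] (b * d)) := by
          simp [ins13, ins23, Algebra.TensorProduct.tmul_mul_tmul]
        rw [this]
        simp [hF, Algebra.TensorProduct.tmul_mul_tmul]
      | add a' b' ha hb => simp only [mul_add, map_add, ha, hb]
    | add a' b' ha hb => simp only [add_mul, map_add, ha, hb]
  have hXR : (LinearMap.rTensor K aS R) * R = 1 := by
    rw [← Fprod R R, ← hQT.hex1, F12, hEone]
  calc LinearMap.rTensor K aS R = (LinearMap.rTensor K aS R) * (R * Ri) := by
        rw [hQT.mul_inv, mul_one]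
    _ = ((LinearMap.rTensor K aS R) * R) * Ri := by rw [mul_assoc]
    _ = Ri := by rw [hXR, one_mul]

/-- `(id ⊗ S⁻¹) R = R⁻¹`. -/
lemma lTensor_sinv_R (hQT : QuasiTri 𝕜 K R Ri) (Sinv : K →ₗ[𝕜] K)
    (hS₁ : ∀ k : K, aS (Sinv k) = k) (hS₂ : ∀ k : K, Sinv (aS k) = k) :
    LinearMap.lTensor K Sinv R = Ri := by
  set inner : K ⊗[𝕜] K →ₐ[𝕜] K :=
    (Algebra.TensorProduct.rid 𝕜 𝕜 K).toAlgHom.comp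
      (Algebra.TensorProduct.map (AlgHom.id 𝕜 K) (Bialgebra.counitAlgHom 𝕜 K)) with hinner
  set G2 : K ⊗[𝕜] (K ⊗[𝕜] K) →ₐ[𝕜] K ⊗[𝕜] K :=
    Algebra.TensorProduct.map (AlgHom.id 𝕜 K) inner with hG2
  have innereq : ∀ u : K ⊗[𝕜] K,
      inner u = (TensorProduct.rid 𝕜 K) (LinearMap.lTensor K εK u) := by
    intro u
    induction u using TensorProduct.induction_on with
    | zero => simp
    | tmul x y => simp [hinner]
    | add a b ha hb => simp only [map_add, ha, hb]
  have g23 : ∀ W : K ⊗[𝕜] K, G2 (comul23 𝕜 K W) = W := by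
    intro W
    induction W using TensorProduct.induction_on with
    | zero => simp
    | tmul c d =>
      have : comul23 𝕜 K (c ⊗ₜ d) = c ⊗ₜ (Δ d) := rfl
      rw [this]
      have : G2 (c ⊗ₜ (Δ d)) = c ⊗ₜ inner (Δ d) := by simp [hG2]
      rw [this, innereq, Coalgebra.lTensor_counit_comul]
      simp
    | add a b ha hb => simp only [map_add, ha, hb]
  have g13 : ∀ W : K ⊗[𝕜] K, G2 (ins13 𝕜 K W)
      = ((TensorProduct.rid 𝕜 K) (LinearMap.lTensor K εK W)) ⊗ₜ (1 : K) := by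
    intro W
    induction W using TensorProduct.induction_on with
    | zero => simp
    | tmul c d => simp [hG2, hinner, ins13, smul_tmul']
    | add a b ha hb => simp only [map_add, ha, hb, add_tmul]
  have g12 : ∀ W : K ⊗[𝕜] K, G2 (ins12 𝕜 K W) = W := by
    intro W
    induction W using TensorProduct.induction_on with
    | zero => simp
    | tmul c d => simp [hG2, hinner, ins12]
    | add a b ha hb => simp only [map_add, ha, hb]
  set E : K := (TensorProduct.rid 𝕜 K) (LinearMap.lTensor K εK R) with hE
  have hR : R = (E ⊗ₜ[𝕜] (1 : K)) * R := by
    conv_lhs => rw [← g23 R, hQT.hex2]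
    rw [map_mul, g13, g12]
  have hEone : (E ⊗ₜ[𝕜] (1 : K) : K ⊗[𝕜] K) = 1 := by
    calc (E ⊗ₜ[𝕜] (1 : K) : K ⊗[𝕜] K) = (E ⊗ₜ[𝕜] (1 : K)) * (R * Ri) := by
          rw [hQT.mul_inv, mul_one]
      _ = ((E ⊗ₜ[𝕜] (1 : K)) * R) * Ri := by rw [mul_assoc]
      _ = R * Ri := by rw [← hR]
      _ = 1 := hQT.mul_inv
  set F2 : K ⊗[𝕜] (K ⊗[𝕜] K) →ₗ[𝕜] K ⊗[𝕜] K :=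
    LinearMap.lTensor K
      (μK ∘ₗ LinearMap.rTensor K Sinv ∘ₗ (TensorProduct.comm 𝕜 K K).toLinearMap) with hF2
  have F23 : F2 (comul23 𝕜 K R) = E ⊗ₜ[𝕜] (1 : K) := by
    have main : ∀ W : K ⊗[𝕜] K, F2 (comul23 𝕜 K W)
        = ((TensorProduct.rid 𝕜 K) (LinearMap.lTensor K εK W)) ⊗ₜ (1 : K) := by
      intro W
      induction W using TensorProduct.induction_on with
      | zero => simp
      | tmul c d =>
        have h0 : comul23 𝕜 K (c ⊗ₜ d) = c ⊗ₜ (Δ d) := rfl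
        rw [h0]
        have h1 : F2 (c ⊗ₜ (Δ d))
            = c ⊗ₜ (μK (LinearMap.rTensor K Sinv ((TensorProduct.comm 𝕜 K K) (Δ d)))) := rfl
        rw [h1, sinv_contract Sinv hS₁ hS₂]
        simp [Algebra.algebraMap_eq_smul_one, tmul_smul, smul_tmul']
      | add a b ha hb => simp only [map_add, ha, hb, add_tmul]
    rw [main R, hE]
  have Fprod : ∀ u v : K ⊗[𝕜] K,
      F2 (ins13 𝕜 K u * ins12 𝕜 K v) = (LinearMap.lTensor K Sinv u) * v := by
    intro u v
    induction u using TensorProduct.induction_on with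
    | zero => simp
    | tmul a b =>
      induction v using TensorProduct.induction_on with
      | zero => simp
      | tmul c d =>
        have : ins13 𝕜 K (a ⊗ₜ b) * ins12 𝕜 K (c ⊗ₜ d)
            = (a * c) ⊗ₜ[𝕜] (d ⊗ₜ[𝕜] b) := by
          simp [ins13, ins12, Algebra.TensorProduct.tmul_mul_tmul]
        rw [this]
        simp [hF2, Algebra.TensorProduct.tmul_mul_tmul]
      | add a' b' ha hb => simp only [mul_add, map_add, ha, hb]
    | add a' b' ha hb => simp only [add_mul, map_add, ha, hb]
  have hXR : (LinearMap.lTensor K Sinv R) * R = 1 := by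
    rw [← Fprod R R, ← hQT.hex2, F23, hEone]
  calc LinearMap.lTensor K Sinv R = (LinearMap.lTensor K Sinv R) * (R * Ri) := by
        rw [hQT.mul_inv, mul_one]
    _ = ((LinearMap.lTensor K Sinv R) * R) * Ri := by rw [mul_assoc]
    _ = Ri := by rw [hXR, one_mul]

/-- `(S⁻¹ ⊗ S⁻¹) R⁻¹ = R⁻¹`. -/
lemma map_sinv_sinv_Ri (hQT : QuasiTri 𝕜 K R Ri) (Sinv : K →ₗ[𝕜] K)
    (hS₁ : ∀ k : K, aS (Sinv k) = k) (hS₂ : ∀ k : K, Sinv (aS k) = k) :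
    TensorProduct.map Sinv Sinv Ri = Ri := by
  have key : TensorProduct.map Sinv Sinv (LinearMap.rTensor K aS R)
      = LinearMap.lTensor K Sinv R := by
    rw [LinearMap.rTensor, ← LinearMap.comp_apply, ← TensorProduct.map_comp]
    have h1 : Sinv ∘ₗ aS = LinearMap.id := LinearMap.ext hS₂
    rw [h1, LinearMap.lTensor]
    rfl
  calc TensorProduct.map Sinv Sinv Ri
      = TensorProduct.map Sinv Sinv (LinearMap.rTensor K aS R) := by
        rw [rTensor_antipode_R R Ri hQT]
    _ = LinearMap.lTensor K Sinv R := key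
    _ = Ri := lTensor_sinv_R R Ri hQT Sinv hS₁ hS₂

end HopfR

section Hex
variable {𝕜 : Type*} [CommRing 𝕜] {K : Type*} [Ring K] [HopfAlgebra 𝕜 K]

local notation "Δ" => (Coalgebra.comul : K →ₗ[𝕜] K ⊗[𝕜] K)

/-- Insert `K ⊗ K` into legs 1,3 of `(K ⊗ K) ⊗ (K ⊗ K)`. -/
def q13 : K ⊗[𝕜] K →ₐ[𝕜] (K ⊗[𝕜] K) ⊗[𝕜] (K ⊗[𝕜] K) :=
  Algebra.TensorProduct.map Algebra.TensorProduct.includeLeft Algebra.TensorProduct.includeLeft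

/-- Insert into legs 1,4. -/
def q14 : K ⊗[𝕜] K →ₐ[𝕜] (K ⊗[𝕜] K) ⊗[𝕜] (K ⊗[𝕜] K) :=
  Algebra.TensorProduct.map Algebra.TensorProduct.includeLeft Algebra.TensorProduct.includeRight

/-- Insert into legs 2,3. -/
def q23 : K ⊗[𝕜] K →ₐ[𝕜] (K ⊗[𝕜] K) ⊗[𝕜] (K ⊗[𝕜] K) :=
  Algebra.TensorProduct.map Algebra.TensorProduct.includeRight Algebra.TensorProduct.includeLeft

/-- Insert into legs 2,4. -/
def q24 : K ⊗[𝕜] K →ₐ[𝕜] (K ⊗[𝕜] K) ⊗[𝕜] (K ⊗[𝕜] K) :=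
  Algebra.TensorProduct.map Algebra.TensorProduct.includeRight Algebra.TensorProduct.includeRight

lemma q13_tmul (c d : K) : q13 (𝕜 := 𝕜) (c ⊗ₜ d) = (c ⊗ₜ (1 : K)) ⊗ₜ (d ⊗ₜ (1 : K)) := rfl
lemma q14_tmul (c d : K) : q14 (𝕜 := 𝕜) (c ⊗ₜ d) = (c ⊗ₜ (1 : K)) ⊗ₜ ((1 : K) ⊗ₜ d) := rfl
lemma q23_tmul (c d : K) : q23 (𝕜 := 𝕜) (c ⊗ₜ d) = ((1 : K) ⊗ₜ c) ⊗ₜ (d ⊗ₜ (1 : K)) := rfl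
lemma q24_tmul (c d : K) : q24 (𝕜 := 𝕜) (c ⊗ₜ d) = ((1 : K) ⊗ₜ c) ⊗ₜ ((1 : K) ⊗ₜ d) := rfl

variable (R Ri : K ⊗[𝕜] K)

/-- First hexagon for `T = τ(R)`. -/
lemma hexT_a (hQT : QuasiTri 𝕜 K R Ri) :
    comul12 𝕜 K ((TensorProduct.comm 𝕜 K K) R)
      = ins23 𝕜 K ((TensorProduct.comm 𝕜 K K) R)
          * ins13 𝕜 K ((TensorProduct.comm 𝕜 K K) R) := by
  set π : K ⊗[𝕜] (K ⊗[𝕜] K) →ₐ[𝕜] K ⊗[𝕜] (K ⊗[𝕜] K) :=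
    (Algebra.TensorProduct.assoc 𝕜 𝕜 𝕜 K K K).toAlgHom.comp
      (Algebra.TensorProduct.comm 𝕜 K (K ⊗[𝕜] K)).toAlgHom with hπ
  have a1 : ∀ W : K ⊗[𝕜] K, π (comul23 𝕜 K W)
      = comul12 𝕜 K ((TensorProduct.comm 𝕜 K K) W) := by
    intro W
    induction W using TensorProduct.induction_on with
    | zero => simp
    | tmul c d =>
      have h0 : comul23 𝕜 K (c ⊗ₜ d) = c ⊗ₜ (Δ d) := rfl
      have h1 : π (c ⊗ₜ (Δ d)) = (Algebra.TensorProduct.assoc 𝕜 𝕜 𝕜 K K K) ((Δ d) ⊗ₜ c) := by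
        simp [hπ]
      have h2 : comul12 𝕜 K ((TensorProduct.comm 𝕜 K K) (c ⊗ₜ d))
          = (Algebra.TensorProduct.assoc 𝕜 𝕜 𝕜 K K K) ((Δ d) ⊗ₜ c) := rfl
      rw [h0, h1, h2]
    | add a b ha hb => simp only [map_add, ha, hb]
  have a2 : ∀ W : K ⊗[𝕜] K, π (ins13 𝕜 K W)
      = ins23 𝕜 K ((TensorProduct.comm 𝕜 K K) W) := by
    intro W
    induction W using TensorProduct.induction_on with
    | zero => simp
    | tmul a b => simp [hπ, ins13, ins23]
    | add a b ha hb => simp only [map_add, ha, hb]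
  have a3 : ∀ W : K ⊗[𝕜] K, π (ins12 𝕜 K W)
      = ins13 𝕜 K ((TensorProduct.comm 𝕜 K K) W) := by
    intro W
    induction W using TensorProduct.induction_on with
    | zero => simp
    | tmul a b => simp [hπ, ins12, ins13]
    | add a b ha hb => simp only [map_add, ha, hb]
  rw [← a1, hQT.hex2, map_mul, a2, a3]

/-- Second hexagon for `T = τ(R)`. -/
lemma hexT_b (hQT : QuasiTri 𝕜 K R Ri) :
    comul23 𝕜 K ((TensorProduct.comm 𝕜 K K) R)
      = ins12 𝕜 K ((TensorProduct.comm 𝕜 K K) R)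
          * ins13 𝕜 K ((TensorProduct.comm 𝕜 K K) R) := by
  set π : K ⊗[𝕜] (K ⊗[𝕜] K) →ₐ[𝕜] K ⊗[𝕜] (K ⊗[𝕜] K) :=
    (Algebra.TensorProduct.comm 𝕜 (K ⊗[𝕜] K) K).toAlgHom.comp
      (Algebra.TensorProduct.assoc 𝕜 𝕜 𝕜 K K K).symm.toAlgHom with hπ
  have b1 : ∀ W : K ⊗[𝕜] K, π (comul12 𝕜 K W)
      = comul23 𝕜 K ((TensorProduct.comm 𝕜 K K) W) := by
    intro W
    induction W using TensorProduct.induction_on with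
    | zero => simp
    | tmul c d =>
      have h0 : comul12 𝕜 K (c ⊗ₜ d) = (Algebra.TensorProduct.assoc 𝕜 𝕜 𝕜 K K K) ((Δ c) ⊗ₜ d) := rfl
      have h1 : π ((Algebra.TensorProduct.assoc 𝕜 𝕜 𝕜 K K K) ((Δ c) ⊗ₜ d)) = d ⊗ₜ (Δ c) := by
        simp [hπ]
      have h2 : comul23 𝕜 K ((TensorProduct.comm 𝕜 K K) (c ⊗ₜ d)) = d ⊗ₜ (Δ c) := rfl
      rw [h0, h1, h2]
    | add a b ha hb => simp only [map_add, ha, hb]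
  have b2 : ∀ W : K ⊗[𝕜] K, π (ins13 𝕜 K W)
      = ins12 𝕜 K ((TensorProduct.comm 𝕜 K K) W) := by
    intro W
    induction W using TensorProduct.induction_on with
    | zero => simp
    | tmul a b => simp [hπ, ins13, ins12]
    | add a b ha hb => simp only [map_add, ha, hb]
  have b3 : ∀ W : K ⊗[𝕜] K, π (ins23 𝕜 K W)
      = ins13 𝕜 K ((TensorProduct.comm 𝕜 K K) W) := by
    intro W
    induction W using TensorProduct.induction_on with
    | zero => simp
    | tmul a b => simp [hπ, ins23, ins13]
    | add a b ha hb => simp only [map_add, ha, hb]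
  rw [← b1, hQT.hex1, map_mul, b2, b3]

/-- `(Δ ⊗ Δ)` of `T = τ(R)` as a product of leg insertions. -/
lemma DD_T (hQT : QuasiTri 𝕜 K R Ri) :
    TensorProduct.map Δ Δ ((TensorProduct.comm 𝕜 K K) R)
      = q23 ((TensorProduct.comm 𝕜 K K) R) * q24 ((TensorProduct.comm 𝕜 K K) R)
          * (q13 ((TensorProduct.comm 𝕜 K K) R) * q14 ((TensorProduct.comm 𝕜 K K) R)) := by
  set A : K ⊗[𝕜] (K ⊗[𝕜] K) →ₐ[𝕜] (K ⊗[𝕜] K) ⊗[𝕜] (K ⊗[𝕜] K) :=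
    (Algebra.TensorProduct.assoc 𝕜 𝕜 𝕜 K K (K ⊗[𝕜] K)).symm.toAlgHom.comp
      (Algebra.TensorProduct.map (AlgHom.id 𝕜 K)
        (Algebra.TensorProduct.map (AlgHom.id 𝕜 K) (Bialgebra.comulAlgHom 𝕜 K))) with hA
  set B' : K ⊗[𝕜] (K ⊗[𝕜] K) →ₐ[𝕜] (K ⊗[𝕜] K) ⊗[𝕜] (K ⊗[𝕜] K) :=
    Algebra.TensorProduct.map Algebra.TensorProduct.includeRight
      (AlgHom.id 𝕜 (K ⊗[𝕜] K)) with hB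
  set C' : K ⊗[𝕜] (K ⊗[𝕜] K) →ₐ[𝕜] (K ⊗[𝕜] K) ⊗[𝕜] (K ⊗[𝕜] K) :=
    Algebra.TensorProduct.map Algebra.TensorProduct.includeLeft
      (AlgHom.id 𝕜 (K ⊗[𝕜] K)) with hC
  have c1 : ∀ W : K ⊗[𝕜] K, TensorProduct.map Δ Δ W = A (comul12 𝕜 K W) := by
    have sub : ∀ (u : K ⊗[𝕜] K) (d : K),
        A ((Algebra.TensorProduct.assoc 𝕜 𝕜 𝕜 K K K) (u ⊗ₜ d)) = u ⊗ₜ (Δ d) := by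
      intro u d
      induction u using TensorProduct.induction_on with
      | zero => simp
      | tmul x y => simp [hA]
      | add a b ha hb => simp only [add_tmul, map_add, ha, hb]
    intro W
    induction W using TensorProduct.induction_on with
    | zero => simp
    | tmul c d =>
      have h0 : comul12 𝕜 K (c ⊗ₜ d) = (Algebra.TensorProduct.assoc 𝕜 𝕜 𝕜 K K K) ((Δ c) ⊗ₜ d) := rfl
      rw [h0, sub]
      rfl
    | add a b ha hb => simp only [map_add, ha, hb]
  have c2 : ∀ W : K ⊗[𝕜] K, A (ins23 𝕜 K W) = B' (comul23 𝕜 K W) := by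
    intro W
    induction W using TensorProduct.induction_on with
    | zero => simp
    | tmul c d =>
      have h0 : ins23 𝕜 K (c ⊗ₜ d) = (1 : K) ⊗ₜ[𝕜] (c ⊗ₜ[𝕜] d) := rfl
      have h1 : comul23 𝕜 K (c ⊗ₜ d) = c ⊗ₜ (Δ d) := rfl
      rw [h0, h1]
      simp [hA, hB]
    | add a b ha hb => simp only [map_add, ha, hb]
  have c3 : ∀ W : K ⊗[𝕜] K, A (ins13 𝕜 K W) = C' (comul23 𝕜 K W) := by
    intro W
    induction W using TensorProduct.induction_on with
    | zero => simp
    | tmul c d =>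
      have h0 : ins13 𝕜 K (c ⊗ₜ d) = c ⊗ₜ[𝕜] ((1 : K) ⊗ₜ[𝕜] d) := rfl
      have h1 : comul23 𝕜 K (c ⊗ₜ d) = c ⊗ₜ (Δ d) := rfl
      rw [h0, h1]
      simp [hA, hC]
    | add a b ha hb => simp only [map_add, ha, hb]
  have c4 : ∀ W : K ⊗[𝕜] K, B' (ins12 𝕜 K W) = q23 W := by
    intro W
    induction W using TensorProduct.induction_on with
    | zero => simp
    | tmul c d => simp [hB, ins12, q23]
    | add a b ha hb => simp only [map_add, ha, hb]
  have c5 : ∀ W : K ⊗[𝕜] K, B' (ins13 𝕜 K W) = q24 W := by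
    intro W
    induction W using TensorProduct.induction_on with
    | zero => simp
    | tmul c d => simp [hB, ins13, q24]
    | add a b ha hb => simp only [map_add, ha, hb]
  have c6 : ∀ W : K ⊗[𝕜] K, C' (ins12 𝕜 K W) = q13 W := by
    intro W
    induction W using TensorProduct.induction_on with
    | zero => simp
    | tmul c d => simp [hC, ins12, q13]
    | add a b ha hb => simp only [map_add, ha, hb]
  have c7 : ∀ W : K ⊗[𝕜] K, C' (ins13 𝕜 K W) = q14 W := by
    intro W
    induction W using TensorProduct.induction_on with
    | zero => simp
    | tmul c d => simp [hC, ins13, q14]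
    | add a b ha hb => simp only [map_add, ha, hb]
  rw [c1, hexT_a R Ri hQT, map_mul, c2, c3, hexT_b R Ri hQT, map_mul, map_mul,
    c4, c5, c6, c7]

lemma q_disjoint (u v : K ⊗[𝕜] K) :
    q24 (𝕜 := 𝕜) u * q13 (𝕜 := 𝕜) v = q13 (𝕜 := 𝕜) v * q24 (𝕜 := 𝕜) u := by
  induction u using TensorProduct.induction_on with
  | zero => simp
  | tmul c d =>
    induction v using TensorProduct.induction_on with
    | zero => simp
    | tmul e f =>
      rw [q24_tmul, q13_tmul]
      simp [Algebra.TensorProduct.tmul_mul_tmul]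
    | add a b ha hb => simp only [map_add, add_mul, mul_add, ha, hb]
  | add a b ha hb => simp only [map_add, add_mul, mul_add, ha, hb]

/-- The master identity in `(K⊗K)⊗(K⊗K)` for antimultiplicativity of the involution. -/
lemma master_hex (hQT : QuasiTri 𝕜 K R Ri) :
    TensorProduct.map Δ Δ ((TensorProduct.comm 𝕜 K K) R)
        * q14 ((TensorProduct.comm 𝕜 K K) Ri)
      = q23 ((TensorProduct.comm 𝕜 K K) R)
          * (q13 ((TensorProduct.comm 𝕜 K K) R) * q24 ((TensorProduct.comm 𝕜 K K) R)) := by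
  have hTTi : (TensorProduct.comm 𝕜 K K) R * (TensorProduct.comm 𝕜 K K) Ri = 1 := by
    rw [← comm_mul', hQT.mul_inv, comm_one']
  rw [DD_T R Ri hQT]
  calc q23 ((TensorProduct.comm 𝕜 K K) R) * q24 ((TensorProduct.comm 𝕜 K K) R)
          * (q13 ((TensorProduct.comm 𝕜 K K) R) * q14 ((TensorProduct.comm 𝕜 K K) R))
          * q14 ((TensorProduct.comm 𝕜 K K) Ri)
      = q23 ((TensorProduct.comm 𝕜 K K) R) * q24 ((TensorProduct.comm 𝕜 K K) R)
          * (q13 ((TensorProduct.comm 𝕜 K K) R)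
            * (q14 ((TensorProduct.comm 𝕜 K K) R) * q14 ((TensorProduct.comm 𝕜 K K) Ri))) := by
        simp only [mul_assoc]
    _ = q23 ((TensorProduct.comm 𝕜 K K) R) * q24 ((TensorProduct.comm 𝕜 K K) R)
          * q13 ((TensorProduct.comm 𝕜 K K) R) := by
        rw [← map_mul, hTTi, map_one, mul_one]
    _ = q23 ((TensorProduct.comm 𝕜 K K) R)
          * (q13 ((TensorProduct.comm 𝕜 K K) R) * q24 ((TensorProduct.comm 𝕜 K K) R)) := by
        rw [mul_assoc, q_disjoint]

/-- Quasi-cocommutativity transported through `τ`. -/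
lemma quasiT (hQT : QuasiTri 𝕜 K R Ri) (h : K) :
    (TensorProduct.comm 𝕜 K K) R * (TensorProduct.comm 𝕜 K K) (Δ h)
      = Δ h * (TensorProduct.comm 𝕜 K K) R := by
  have := congrArg (TensorProduct.comm 𝕜 K K) (hQT.quasi h)
  rw [comm_mul', comm_mul', comm_comm'] at this
  exact this.symm

end Hex

section Act
variable {𝕜 : Type*} [CommRing 𝕜] {K : Type*} [Ring K] [HopfAlgebra 𝕜 K]
variable {L : Type*} [Ring L] [Algebra 𝕜 L]

local notation "Δ" => (Coalgebra.comul : K →ₗ[𝕜] K ⊗[𝕜] K)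
local notation "μL" => LinearMap.mul' 𝕜 L

lemma actPair_tmul (act : K →ₗ[𝕜] L →ₗ[𝕜] L) (k l : K) :
    actPair 𝕜 K act (k ⊗ₜ l) = TensorProduct.map (act k) (act l) := by
  simp [actPair]

lemma actPair_one (act : K →ₗ[𝕜] L →ₗ[𝕜] L) (hact : MAlgAction 𝕜 K act) :
    actPair 𝕜 K act 1 = LinearMap.id := by
  rw [Algebra.TensorProduct.one_def, actPair_tmul, hact.act_one, TensorProduct.map_id]

lemma actPair_mul (act : K →ₗ[𝕜] L →ₗ[𝕜] L) (hact : MAlgAction 𝕜 K act)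
    (W₁ W₂ : K ⊗[𝕜] K) :
    actPair 𝕜 K act (W₁ * W₂) = (actPair 𝕜 K act W₁) ∘ₗ (actPair 𝕜 K act W₂) := by
  induction W₁ using TensorProduct.induction_on with
  | zero => simp [LinearMap.ext_iff]
  | tmul a b =>
    induction W₂ using TensorProduct.induction_on with
    | zero => simp [LinearMap.ext_iff]
    | tmul c d =>
      rw [Algebra.TensorProduct.tmul_mul_tmul, actPair_tmul, actPair_tmul, actPair_tmul,
        hact.act_act, hact.act_act, TensorProduct.map_comp]
    | add u v hu hv =>
      simp only [mul_add, map_add, hu, hv, LinearMap.comp_add]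
  | add u v hu hv =>
    simp only [add_mul, map_add, hu, hv, LinearMap.add_comp]

/-- The action of `(K⊗K)⊗(K⊗K)` on `(L⊗L)⊗(L⊗L)` componentwise. -/
def quadAct (act : K →ₗ[𝕜] L →ₗ[𝕜] L) :
    (K ⊗[𝕜] K) ⊗[𝕜] (K ⊗[𝕜] K) →ₗ[𝕜]
      ((L ⊗[𝕜] L) ⊗[𝕜] (L ⊗[𝕜] L) →ₗ[𝕜] (L ⊗[𝕜] L) ⊗[𝕜] (L ⊗[𝕜] L)) :=
  (TensorProduct.homTensorHomMap (RingHom.id 𝕜) _ _ _ _).comp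
    (TensorProduct.map (actPair 𝕜 K act) (actPair 𝕜 K act))

lemma quadAct_tmul (act : K →ₗ[𝕜] L →ₗ[𝕜] L) (W₁ W₂ : K ⊗[𝕜] K) :
    quadAct act (W₁ ⊗ₜ W₂)
      = TensorProduct.map (actPair 𝕜 K act W₁) (actPair 𝕜 K act W₂) := by
  simp [quadAct]

lemma quadAct_one (act : K →ₗ[𝕜] L →ₗ[𝕜] L) (hact : MAlgAction 𝕜 K act) :
    quadAct act (1 : (K ⊗[𝕜] K) ⊗[𝕜] (K ⊗[𝕜] K)) = LinearMap.id := by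
  rw [Algebra.TensorProduct.one_def, quadAct_tmul, actPair_one act hact, TensorProduct.map_id]

lemma quadAct_mul (act : K →ₗ[𝕜] L →ₗ[𝕜] L) (hact : MAlgAction 𝕜 K act)
    (X Y : (K ⊗[𝕜] K) ⊗[𝕜] (K ⊗[𝕜] K)) :
    quadAct act (X * Y) = (quadAct act X) ∘ₗ (quadAct act Y) := by
  induction X using TensorProduct.induction_on with
  | zero => simp [LinearMap.ext_iff]
  | tmul a b =>
    induction Y using TensorProduct.induction_on with
    | zero => simp [LinearMap.ext_iff]
    | tmul c d =>
      rw [Algebra.TensorProduct.tmul_mul_tmul, quadAct_tmul, quadAct_tmul, quadAct_tmul,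
        actPair_mul act hact, actPair_mul act hact, TensorProduct.map_comp]
    | add u v hu hv =>
      simp only [mul_add, map_add, hu, hv, LinearMap.comp_add]
  | add u v hu hv =>
    simp only [add_mul, map_add, hu, hv, LinearMap.add_comp]

lemma actPair_mul_apply (act : K →ₗ[𝕜] L →ₗ[𝕜] L) (hact : MAlgAction 𝕜 K act)
    (W₁ W₂ : K ⊗[𝕜] K) (ξ : L ⊗[𝕜] L) :
    actPair 𝕜 K act (W₁ * W₂) ξ = actPair 𝕜 K act W₁ (actPair 𝕜 K act W₂ ξ) := by
  rw [actPair_mul act hact]; rfl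

lemma quadAct_mul_apply (act : K →ₗ[𝕜] L →ₗ[𝕜] L) (hact : MAlgAction 𝕜 K act)
    (X Y : (K ⊗[𝕜] K) ⊗[𝕜] (K ⊗[𝕜] K)) (ξ : (L ⊗[𝕜] L) ⊗[𝕜] (L ⊗[𝕜] L)) :
    quadAct act (X * Y) ξ = quadAct act X (quadAct act Y ξ) := by
  rw [quadAct_mul act hact]; rfl

lemma sweedler_eq (act : K →ₗ[𝕜] L →ₗ[𝕜] L) (s : K ⊗[𝕜] K) (a b : L) :
    sweedlerOp 𝕜 K act (LinearMap.mul 𝕜 L) s a b = μL (actPair 𝕜 K act s (a ⊗ₜ b)) := by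
  induction s using TensorProduct.induction_on with
  | zero => simp [sweedlerOp]
  | tmul k l => simp [sweedlerOp, actPair]
  | add u v hu hv => simp only [map_add, LinearMap.add_apply, hu, hv]

/-- Expansion of the action on a product of two pairs. -/
lemma mulExpand (act : K →ₗ[𝕜] L →ₗ[𝕜] L) (hact : MAlgAction 𝕜 K act)
    (W : K ⊗[𝕜] K) (ξ : (L ⊗[𝕜] L) ⊗[𝕜] (L ⊗[𝕜] L)) :
    actPair 𝕜 K act W (TensorProduct.map μL μL ξ)
      = TensorProduct.map μL μL (quadAct act (TensorProduct.map Δ Δ W) ξ) := by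
  induction W using TensorProduct.induction_on with
  | zero => simp
  | tmul c d =>
    induction ξ using TensorProduct.induction_on with
    | zero => simp
    | tmul u v =>
      induction u using TensorProduct.induction_on with
      | zero => simp
      | tmul a b =>
        induction v using TensorProduct.induction_on with
        | zero => simp
        | tmul a' b' =>
          simp only [actPair_tmul, quadAct_tmul, TensorProduct.map_tmul,
            LinearMap.mul'_apply]
          rw [hact.act_mul, hact.act_mul, sweedler_eq, sweedler_eq]
        | add p q hp hq => simp only [tmul_add, map_add, hp, hq]
      | add p q hp hq => simp only [add_tmul, map_add, hp, hq]
    | add p q hp hq => simp only [map_add, hp, hq]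
  | add p q hp hq => simp only [map_add, LinearMap.add_apply, hp, hq]

/-- The braided product in terms of `quadAct`. -/
lemma botMul_eq (act : K →ₗ[𝕜] L →ₗ[𝕜] L) (hact : MAlgAction 𝕜 K act) (R : K ⊗[𝕜] K)
    (u v : L ⊗[𝕜] L) :
    botMul 𝕜 K act R u v
      = TensorProduct.map μL μL
          (quadAct act (q23 ((TensorProduct.comm 𝕜 K K) R))
            ((TensorProduct.tensorTensorTensorComm 𝕜 L L L L) (u ⊗ₜ v))) := by
  induction u using TensorProduct.induction_on with
  | zero => simp [botMul, botMulAux]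
  | tmul x y =>
    induction v using TensorProduct.induction_on with
    | zero => simp [botMul, botMulAux]
    | tmul x' y' =>
      have claim1 : botMul 𝕜 K act R (x ⊗ₜ y) (x' ⊗ₜ y')
          = TensorProduct.map μL μL
              ((TensorProduct.assoc 𝕜 (L ⊗[𝕜] L) L L)
                ((TensorProduct.map (TensorProduct.assoc 𝕜 L L L).symm.toLinearMap
                    (LinearMap.id : L →ₗ[𝕜] L))
                  ((x ⊗ₜ (actPair 𝕜 K act ((TensorProduct.comm 𝕜 K K) R) (x' ⊗ₜ y))) ⊗ₜ y'))) := by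
        simp [botMul, botMulAux, braiding]
      rw [claim1]
      have claim2 : ∀ W : K ⊗[𝕜] K,
          TensorProduct.map μL μL
              ((TensorProduct.assoc 𝕜 (L ⊗[𝕜] L) L L)
                ((TensorProduct.map (TensorProduct.assoc 𝕜 L L L).symm.toLinearMap
                    (LinearMap.id : L →ₗ[𝕜] L))
                  ((x ⊗ₜ (actPair 𝕜 K act W (x' ⊗ₜ y))) ⊗ₜ y')))
            = TensorProduct.map μL μL
                (quadAct act (q23 W) ((x ⊗ₜ x') ⊗ₜ (y ⊗ₜ y'))) := by
        intro W
        induction W using TensorProduct.induction_on with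
        | zero => simp
        | tmul c d =>
          rw [actPair_tmul, q23_tmul, quadAct_tmul, actPair_tmul, actPair_tmul]
          simp [hact.act_one]
        | add p q hp hq =>
          simp only [map_add, LinearMap.add_apply, tmul_add, add_tmul, hp, hq]
      rw [claim2]
      simp
    | add p q hp hq => simp only [map_add, tmul_add, hp, hq]
  | add p q hp hq =>
    simp only [map_add, tmul_add, add_tmul, hp, hq, LinearMap.add_apply]

/-- Naturality of the middle-swap under the componentwise action. -/
lemma sigma_nat (act : K →ₗ[𝕜] L →ₗ[𝕜] L)
    (X : (K ⊗[𝕜] K) ⊗[𝕜] (K ⊗[𝕜] K)) (ξ : (L ⊗[𝕜] L) ⊗[𝕜] (L ⊗[𝕜] L)) :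
    (TensorProduct.tensorTensorTensorComm 𝕜 L L L L) (quadAct act X ξ)
      = quadAct act ((TensorProduct.tensorTensorTensorComm 𝕜 K K K K) X)
          ((TensorProduct.tensorTensorTensorComm 𝕜 L L L L) ξ) := by
  induction X using TensorProduct.induction_on with
  | zero => simp
  | tmul W₁ W₂ =>
    induction W₁ using TensorProduct.induction_on with
    | zero => simp
    | tmul c d =>
      induction W₂ using TensorProduct.induction_on with
      | zero => simp
      | tmul e f =>
        induction ξ using TensorProduct.induction_on with
        | zero => simp
        | tmul u v =>
          induction u using TensorProduct.induction_on with
          | zero => simp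
          | tmul x y =>
            induction v using TensorProduct.induction_on with
            | zero => simp
            | tmul z w =>
              simp [quadAct_tmul, actPair_tmul]
            | add p q hp hq => simp only [tmul_add, map_add, hp, hq]
          | add p q hp hq => simp only [add_tmul, map_add, hp, hq]
        | add p q hp hq => simp only [map_add, hp, hq]
      | add p q hp hq =>
        simp only [tmul_add, map_add, hp, hq, LinearMap.add_apply]
    | add p q hp hq =>
      simp only [add_tmul, map_add, hp, hq, LinearMap.add_apply]
  | add p q hp hq => simp only [map_add, hp, hq, LinearMap.add_apply]

lemma ttK_q (W₁ W₂ : K ⊗[𝕜] K) :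
    (TensorProduct.tensorTensorTensorComm 𝕜 K K K K) (W₁ ⊗ₜ W₂)
      = q13 (𝕜 := 𝕜) W₁ * q24 (𝕜 := 𝕜) W₂ := by
  induction W₁ using TensorProduct.induction_on with
  | zero => simp
  | tmul a b =>
    induction W₂ using TensorProduct.induction_on with
    | zero => simp
    | tmul c d =>
      rw [q13_tmul, q24_tmul]
      simp [Algebra.TensorProduct.tmul_mul_tmul]
    | add p q hp hq => simp only [tmul_add, map_add, mul_add, hp, hq]
  | add p q hp hq => simp only [add_tmul, map_add, add_mul, hp, hq]

end Act

end BraidedAux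

section Statement

variable (H : Type*) [Ring H] [HopfAlgebra ℂ H] [StarRing H] [StarModule ℂ H]

open BraidedAux
set_option maxHeartbeats 2000000
set_option synthInstance.maxHeartbeats 1000000

/-- For a quasitriangular Hopf *-algebra `(H, R)` with antireal R-matrix and a
`H`-module *-algebra `L`, the braided tensor product `L ⊥ L` with involution
`(x ⊗ y)* = (R_α ▷ x*) ⊗ (Rᵅ ▷ y*)` is an `H`-module *-algebra: the
involution is involutive, antimultiplicative for the braided product, and
compatible with the diagonal action. -/
theorem braided_tensor_star_algebra
    (starT : H ⊗[ℂ] H → H ⊗[ℂ] H) (hstarT : IsStarT H starT)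
    (hcomulstar : ∀ k : H,
      (Coalgebra.comul (R := ℂ) (star k) : H ⊗[ℂ] H)
        = starT (Coalgebra.comul k))
    (R Ri : H ⊗[ℂ] H) (hQT : QuasiTri ℂ H R Ri)
    (hanti : starT R = Ri)
    -- inverse of the antipode
    (Sinv : H →ₗ[ℂ] H)
    (hS₁ : ∀ k : H, HopfAlgebra.antipode (R := ℂ) (Sinv k) = k)
    (hS₂ : ∀ k : H, Sinv (HopfAlgebra.antipode (R := ℂ) k) = k)
    -- `L` is an `H`-module *-algebra
    {L : Type*} [Ring L] [Algebra ℂ L] [StarRing L] [StarModule ℂ L]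
    (act : H →ₗ[ℂ] L →ₗ[ℂ] L) (hact : MAlgAction ℂ H act)
    (hstaract : ∀ (k : H) (x : L),
      star (act k x) = act (Sinv (star k)) (star x))
    -- the *-structure on `L ⊥ L`
    (starLL : L ⊗[ℂ] L → L ⊗[ℂ] L)
    (hLL_add : ∀ s t : L ⊗[ℂ] L, starLL (s + t) = starLL s + starLL t)
    (hLL_smul : ∀ (c : ℂ) (t : L ⊗[ℂ] L),
      starLL (c • t) = (starRingEnd ℂ c) • starLL t)
    (hLL_tmul : ∀ x y : L,
      starLL (x ⊗ₜ[ℂ] y)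
        = actPair ℂ H act ((TensorProduct.comm ℂ H H) R)
            (star x ⊗ₜ[ℂ] star y)) :
    (∀ t : L ⊗[ℂ] L, starLL (starLL t) = t)
    ∧ (∀ s t : L ⊗[ℂ] L,
      starLL (botMul ℂ H act R s t)
        = botMul ℂ H act R (starLL t) (starLL s))
    ∧ (∀ (k : H) (t : L ⊗[ℂ] L),
      starLL (diagAct ℂ H act k t)
        = diagAct ℂ H act (Sinv (star k)) (starLL t)) := by
  classical
  set T : H ⊗[ℂ] H := (TensorProduct.comm ℂ H H) R with hT
  set Ti : H ⊗[ℂ] H := (TensorProduct.comm ℂ H H) Ri with hTi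
  have starLL0 : starLL 0 = 0 := by
    have h := hLL_add 0 0
    simpa using h.symm
  have starT0 : starT 0 = 0 := by
    have h := hstarT.map_add 0 0
    simpa using h.symm
  have TTi : T * Ti = 1 := by
    rw [hT, hTi, ← comm_mul', hQT.mul_inv, comm_one']
  have starTcomm : ∀ w : H ⊗[ℂ] H,
      starT ((TensorProduct.comm ℂ H H) w) = (TensorProduct.comm ℂ H H) (starT w) := by
    intro w
    induction w using TensorProduct.induction_on with
    | zero => rw [map_zero, starT0, map_zero]
    | tmul u v => rw [TensorProduct.comm_tmul, hstarT.map_tmul, hstarT.map_tmul,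
        TensorProduct.comm_tmul]
    | add a b ha hb => rw [map_add, hstarT.map_add, hstarT.map_add, ha, hb, map_add]
  have mapcomm : ∀ w : H ⊗[ℂ] H,
      TensorProduct.map Sinv Sinv ((TensorProduct.comm ℂ H H) w)
        = (TensorProduct.comm ℂ H H) (TensorProduct.map Sinv Sinv w) := by
    intro w
    induction w using TensorProduct.induction_on with
    | zero => simp
    | tmul u v => simp
    | add a b ha hb => simp only [map_add, ha, hb]
  have JT : TensorProduct.map Sinv Sinv (starT T) = Ti := by
    rw [hT, starTcomm, hanti, mapcomm, map_sinv_sinv_Ri R Ri hQT Sinv hS₁ hS₂, hTi]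
  have STL : ∀ (W : H ⊗[ℂ] H) (x y : L),
      starLL (actPair ℂ H act W (x ⊗ₜ y))
        = actPair ℂ H act T
            (actPair ℂ H act (TensorProduct.map Sinv Sinv (starT W)) (star x ⊗ₜ star y)) := by
    intro W x y
    induction W using TensorProduct.induction_on with
    | zero =>
      rw [map_zero, LinearMap.zero_apply, starLL0, starT0, map_zero, map_zero,
        LinearMap.zero_apply, map_zero]
    | tmul c d =>
      rw [actPair_tmul, TensorProduct.map_tmul, hLL_tmul, hstarT.map_tmul,
        TensorProduct.map_tmul, actPair_tmul, TensorProduct.map_tmul,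
        hstaract, hstaract]
    | add a b ha hb =>
      rw [map_add, LinearMap.add_apply, hLL_add, ha, hb, hstarT.map_add, map_add, map_add,
        LinearMap.add_apply, map_add]
  have F2 : ∀ h : H, TensorProduct.map Sinv Sinv (Coalgebra.comul h)
      = (TensorProduct.comm ℂ H H) (Coalgebra.comul (Sinv h)) := by
    intro h
    have h0 : Coalgebra.comul (R := ℂ) h
        = (TensorProduct.comm ℂ H H)
            (TensorProduct.map (HopfAlgebra.antipode (R := ℂ)) (HopfAlgebra.antipode (R := ℂ))
              (Coalgebra.comul (Sinv h))) := by
      conv_lhs => rw [← hS₁ h]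
      exact comul_antipode' (Sinv h)
    rw [h0]
    have key : ∀ w : H ⊗[ℂ] H,
        TensorProduct.map Sinv Sinv
            ((TensorProduct.comm ℂ H H)
              (TensorProduct.map (HopfAlgebra.antipode (R := ℂ)) (HopfAlgebra.antipode (R := ℂ)) w))
          = (TensorProduct.comm ℂ H H) w := by
      intro w
      induction w using TensorProduct.induction_on with
      | zero => simp
      | tmul u v => simp [hS₂]
      | add a b ha hb => simp only [map_add, ha, hb]
    rw [key]
  have botMulT : ∀ u v : L ⊗[ℂ] L,
      botMul ℂ H act R u v
        = TensorProduct.map (LinearMap.mul' ℂ L) (LinearMap.mul' ℂ L)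
            (quadAct act (q23 T)
              ((TensorProduct.tensorTensorTensorComm ℂ L L L L) (u ⊗ₜ v))) := by
    intro u v
    rw [hT]
    exact botMul_eq act hact R u v
  have masterT : TensorProduct.map Coalgebra.comul Coalgebra.comul T * q14 Ti
      = q23 T * (q13 T * q24 T) := by
    rw [hT, hTi]
    exact master_hex R Ri hQT
  have quasiT' : ∀ h : H,
      T * (TensorProduct.comm ℂ H H) (Coalgebra.comul h) = Coalgebra.comul h * T := by
    intro h
    rw [hT]
    exact quasiT R Ri hQT h
  refine ⟨?_, ?_, ?_⟩
  · -- involutivity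
    intro t
    induction t using TensorProduct.induction_on with
    | zero => rw [starLL0, starLL0]
    | tmul x y =>
      rw [hLL_tmul, STL T (star x) (star y), JT, star_star, star_star,
        ← actPair_mul_apply act hact, TTi, actPair_one act hact, LinearMap.id_apply]
    | add a b ha hb => rw [hLL_add, hLL_add, ha, hb]
  · -- antimultiplicativity
    intro s t
    have main2 : ∀ x y x' y' : L,
        starLL (botMul ℂ H act R (x ⊗ₜ y) (x' ⊗ₜ y'))
          = botMul ℂ H act R (starLL (x' ⊗ₜ y')) (starLL (x ⊗ₜ y)) := by
      intro x y x' y'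
      have STL2 : ∀ W : H ⊗[ℂ] H,
          starLL (TensorProduct.map (LinearMap.mul' ℂ L) (LinearMap.mul' ℂ L)
              (quadAct act (q23 W) ((x ⊗ₜ x') ⊗ₜ (y ⊗ₜ y'))))
            = actPair ℂ H act T
                (TensorProduct.map (LinearMap.mul' ℂ L) (LinearMap.mul' ℂ L)
                  (quadAct act (q14 (TensorProduct.map Sinv Sinv (starT W)))
                    ((star x' ⊗ₜ star x) ⊗ₜ (star y' ⊗ₜ star y)))) := by
        intro W
        induction W using TensorProduct.induction_on with
        | zero =>
          rw [map_zero, map_zero, LinearMap.zero_apply, map_zero, starLL0,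
            starT0, map_zero, map_zero, map_zero, LinearMap.zero_apply, map_zero, map_zero]
        | tmul c d =>
          rw [q23_tmul, hstarT.map_tmul, TensorProduct.map_tmul, q14_tmul]
          simp only [quadAct_tmul, actPair_tmul, TensorProduct.map_tmul, hact.act_one,
            LinearMap.id_apply, LinearMap.mul'_apply]
          rw [hLL_tmul, star_mul, star_mul, hstaract, hstaract]
        | add a b ha hb =>
          rw [map_add, map_add, LinearMap.add_apply, map_add, hLL_add, ha, hb,
            hstarT.map_add, map_add, map_add, map_add, LinearMap.add_apply, map_add,
            map_add]
      have lhs : starLL (botMul ℂ H act R (x ⊗ₜ y) (x' ⊗ₜ y'))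
          = TensorProduct.map (LinearMap.mul' ℂ L) (LinearMap.mul' ℂ L)
              (quadAct act (q23 T * (q13 T * q24 T))
                ((star x' ⊗ₜ star x) ⊗ₜ (star y' ⊗ₜ star y))) := by
        rw [botMulT, TensorProduct.tensorTensorTensorComm_tmul, STL2 T, JT,
          mulExpand act hact, ← quadAct_mul_apply act hact, masterT]
      have rhs : botMul ℂ H act R (starLL (x' ⊗ₜ y')) (starLL (x ⊗ₜ y))
          = TensorProduct.map (LinearMap.mul' ℂ L) (LinearMap.mul' ℂ L)
              (quadAct act (q23 T * (q13 T * q24 T))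
                ((star x' ⊗ₜ star x) ⊗ₜ (star y' ⊗ₜ star y))) := by
        rw [hLL_tmul, hLL_tmul, botMulT]
        rw [show actPair ℂ H act T (star x' ⊗ₜ star y') ⊗ₜ[ℂ]
              actPair ℂ H act T (star x ⊗ₜ star y)
            = quadAct act (T ⊗ₜ T) ((star x' ⊗ₜ star y') ⊗ₜ (star x ⊗ₜ star y)) from by
          rw [quadAct_tmul, TensorProduct.map_tmul]]
        rw [sigma_nat, ttK_q, TensorProduct.tensorTensorTensorComm_tmul,
          ← quadAct_mul_apply act hact]
      rw [lhs, rhs]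
    induction s using TensorProduct.induction_on with
    | zero => simp only [map_zero, LinearMap.zero_apply, starLL0]
    | tmul x y =>
      induction t using TensorProduct.induction_on with
      | zero => simp only [map_zero, LinearMap.zero_apply, starLL0]
      | tmul x' y' => exact main2 x y x' y'
      | add a b ha hb => simp only [map_add, LinearMap.add_apply, hLL_add, ha, hb]
    | add a b ha hb => simp only [map_add, LinearMap.add_apply, hLL_add, ha, hb]
  · -- compatibility with the action
    intro k t
    have diag_eq : ∀ (h : H) (u : L ⊗[ℂ] L),
        diagAct ℂ H act h u = actPair ℂ H act (Coalgebra.comul h) u := fun _ _ => rfl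
    induction t using TensorProduct.induction_on with
    | zero => simp only [map_zero, starLL0]
    | tmul x y =>
      rw [diag_eq, STL, ← hcomulstar, F2 (star k), diag_eq, hLL_tmul,
        ← actPair_mul_apply act hact, ← actPair_mul_apply act hact,
        quasiT' (Sinv (star k))]
    | add a b ha hb =>
      simp only [map_add, hLL_add, ha, hb]
end Statement
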